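/- arXiv:2003.11771 — 7 statements merged into one kernel-verified Lean document; each statement's English description precedes it below -/
import Mathlib

section
/- For every ε ∈ (0,1) and every y ∈ [-ε, ε], one has y - ((3-ε)/(6(1-ε))) y² ≤ log(1+y) ≤ y - ((3-2ε)/6) y². -/
private lemma log_aux_deriv1 (x : ℝ) (hx : -1 < x) :
    HasDerivAt (fun x : ℝ => x - x^2/2 + x^3/3 - Real.log (1+x)) (x^3/(1+x)) x := by
  have h1 : (0:ℝ) < 1 + x := by linarith
  have hlog : HasDerivAt (fun x : ℝ => Real.log (1+x)) (1/(1+x)) x := by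
    have := (Real.hasDerivAt_log h1.ne').comp x ((hasDerivAt_id x).const_add 1)
    simpa [Function.comp_def] using this
  have hpoly : HasDerivAt (fun x : ℝ => x - x^2/2 + x^3/3) (1 - x + x^2) x := by
    have := ((hasDerivAt_id x).sub ((hasDerivAt_pow 2 x).div_const 2)).add
      ((hasDerivAt_pow 3 x).div_const 3)
    refine this.congr_deriv ?_
    push_cast
    ring
  have := hpoly.sub hlog
  refine this.congr_deriv ?_
  field_simp
  ring

private lemma log_aux_deriv2 (x : ℝ) (hx : -1 < x) :
    HasDerivAt (fun x : ℝ => Real.log (1+x) - (x - x^2/2 + x^3/(3*(1+x))))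
      (x^3/(3*(1+x)^2)) x := by
  have h1 : (0:ℝ) < 1 + x := by linarith
  have h3 : (3:ℝ)*(1+x) ≠ 0 := by positivity
  have hlog : HasDerivAt (fun x : ℝ => Real.log (1+x)) (1/(1+x)) x := by
    have := (Real.hasDerivAt_log h1.ne').comp x ((hasDerivAt_id x).const_add 1)
    simpa [Function.comp_def] using this
  have hden : HasDerivAt (fun x : ℝ => 3*(1+x)) 3 x := by
    have := ((hasDerivAt_id x).const_add 1).const_mul (3:ℝ)
    simpa using this
  have hfrac : HasDerivAt (fun x : ℝ => x^3/(3*(1+x)))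
      (((3:ℕ) * x^2 * (3*(1+x)) - x^3 * 3) / (3*(1+x))^2) x :=
    (hasDerivAt_pow 3 x).div hden h3
  have hpoly : HasDerivAt (fun x : ℝ => x - x^2/2 + x^3/(3*(1+x)))
      (1 - x + ((3:ℕ) * x^2 * (3*(1+x)) - x^3 * 3) / (3*(1+x))^2) x := by
    have := ((hasDerivAt_id x).sub ((hasDerivAt_pow 2 x).div_const 2)).add hfrac
    refine this.congr_deriv ?_
    push_cast
    ring
  have := hlog.sub hpoly
  refine this.congr_deriv ?_
  field_simp
  ring

private lemma log_le_cubic (y : ℝ) (hy : -1 < y) :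
    Real.log (1 + y) ≤ y - y^2/2 + y^3/3 := by
  set f : ℝ → ℝ := fun x => x - x^2/2 + x^3/3 - Real.log (1+x) with hf
  have hf0 : f 0 = 0 := by simp [hf]
  have hsub : 0 ≤ f y := by
    rcases le_or_gt 0 y with h0 | h0
    · rcases eq_or_lt_of_le h0 with h0' | h0'
      · rw [← h0', hf0]
      · have hmono : MonotoneOn f (Set.Icc 0 y) := by
          apply monotoneOn_of_deriv_nonneg (convex_Icc 0 y)
          · intro x hx
            exact (log_aux_deriv1 x (by rcases hx with ⟨hx1, _⟩; linarith)).continuousAt.continuousWithinAt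
          · intro x hx
            rw [interior_Icc] at hx
            exact (log_aux_deriv1 x (by rcases hx with ⟨hx1, _⟩; linarith)).differentiableAt.differentiableWithinAt
          · intro x hx
            rw [interior_Icc] at hx
            rcases hx with ⟨hx1, hx2⟩
            rw [(log_aux_deriv1 x (by linarith)).deriv]
            positivity
        have := hmono (Set.left_mem_Icc.2 h0) (Set.right_mem_Icc.2 h0) h0
        rw [hf0] at this; exact this
    · have hanti : AntitoneOn f (Set.Icc y 0) := by
        apply antitoneOn_of_deriv_nonpos (convex_Icc y 0)
        · intro x hx
          exact (log_aux_deriv1 x (by rcases hx with ⟨hx1, _⟩; linarith)).continuousAt.continuousWithinAt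
        · intro x hx
          rw [interior_Icc] at hx
          exact (log_aux_deriv1 x (by rcases hx with ⟨hx1, _⟩; linarith)).differentiableAt.differentiableWithinAt
        · intro x hx
          rw [interior_Icc] at hx
          rcases hx with ⟨hx1, hx2⟩
          rw [(log_aux_deriv1 x (by linarith)).deriv]
          have h1 : (0:ℝ) < 1 + x := by linarith
          have h2 : x^3 ≤ 0 := by nlinarith [sq_nonneg x]
          exact div_nonpos_of_nonpos_of_nonneg h2 h1.le
      have := hanti (Set.left_mem_Icc.2 h0.le) (Set.right_mem_Icc.2 h0.le) h0.le
      rw [hf0] at this; exact this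
  simp only [hf] at hsub
  linarith

private lemma cubic_le_log (y : ℝ) (hy : -1 < y) :
    y - y^2/2 + y^3/(3*(1+y)) ≤ Real.log (1 + y) := by
  set g : ℝ → ℝ := fun x => Real.log (1+x) - (x - x^2/2 + x^3/(3*(1+x))) with hg
  have hg0 : g 0 = 0 := by simp [hg]
  have hsub : 0 ≤ g y := by
    rcases le_or_gt 0 y with h0 | h0
    · have hmono : MonotoneOn g (Set.Icc 0 y) := by
        apply monotoneOn_of_deriv_nonneg (convex_Icc 0 y)
        · intro x hx
          exact (log_aux_deriv2 x (by rcases hx with ⟨hx1, _⟩; linarith)).continuousAt.continuousWithinAt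
        · intro x hx
          rw [interior_Icc] at hx
          exact (log_aux_deriv2 x (by rcases hx with ⟨hx1, _⟩; linarith)).differentiableAt.differentiableWithinAt
        · intro x hx
          rw [interior_Icc] at hx
          rcases hx with ⟨hx1, hx2⟩
          rw [(log_aux_deriv2 x (by linarith)).deriv]
          positivity
      have := hmono (Set.left_mem_Icc.2 h0) (Set.right_mem_Icc.2 h0) h0
      rw [hg0] at this; exact this
    · have hanti : AntitoneOn g (Set.Icc y 0) := by
        apply antitoneOn_of_deriv_nonpos (convex_Icc y 0)
        · intro x hx
          exact (log_aux_deriv2 x (by rcases hx with ⟨hx1, _⟩; linarith)).continuousAt.continuousWithinAt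
        · intro x hx
          rw [interior_Icc] at hx
          exact (log_aux_deriv2 x (by rcases hx with ⟨hx1, _⟩; linarith)).differentiableAt.differentiableWithinAt
        · intro x hx
          rw [interior_Icc] at hx
          rcases hx with ⟨hx1, hx2⟩
          rw [(log_aux_deriv2 x (by linarith)).deriv]
          have h1 : (0:ℝ) < 1 + x := by linarith
          have h2 : x^3 ≤ 0 := by nlinarith [sq_nonneg x]
          apply div_nonpos_of_nonpos_of_nonneg h2
          positivity
      have := hanti (Set.left_mem_Icc.2 h0.le) (Set.right_mem_Icc.2 h0.le) h0.le
      rw [hg0] at this; exact this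
  simp only [hg] at hsub
  linarith

/-- For every ε ∈ (0,1) and every y ∈ [-ε, ε],
    y - ((3-ε)/(6(1-ε))) y² ≤ log(1+y) ≤ y - ((3-2ε)/6) y². -/
theorem log_bounds (ε : ℝ) (hε : ε ∈ Set.Ioo (0 : ℝ) 1)
    (y : ℝ) (hy : y ∈ Set.Icc (-ε) ε) :
    y - ((3 - ε) / (6 * (1 - ε))) * y ^ 2 ≤ Real.log (1 + y) ∧
      Real.log (1 + y) ≤ y - ((3 - 2 * ε) / 6) * y ^ 2 := by
  obtain ⟨hε0, hε1⟩ := hε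
  obtain ⟨hy1, hy2⟩ := hy
  have hym1 : -1 < y := by linarith
  have h1y : (0:ℝ) < 1 + y := by linarith
  have h1e : (0:ℝ) < 1 - ε := by linarith
  constructor
  · have hlow := cubic_le_log y hym1
    have key : y - ((3 - ε) / (6 * (1 - ε))) * y ^ 2 ≤ y - y^2/2 + y^3/(3*(1+y)) := by
      have heq : (y - y^2/2 + y^3/(3*(1+y))) - (y - ((3 - ε) / (6 * (1 - ε))) * y ^ 2)
          = (2 * y^2 * (ε + y)) / (6 * (1 - ε) * (1 + y)) := by
        field_simp
        ring
      have hnn : 0 ≤ (2 * y^2 * (ε + y)) / (6 * (1 - ε) * (1 + y)) := by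
        apply div_nonneg
        · have : 0 ≤ ε + y := by linarith
          positivity
        · positivity
      linarith [heq ▸ hnn]
    linarith
  · have hup := log_le_cubic y hym1
    have key : y - y^2/2 + y^3/3 ≤ y - ((3 - 2 * ε) / 6) * y ^ 2 := by
      nlinarith [mul_nonneg (sq_nonneg y) (sub_nonneg.2 hy2)]
    linarith
end

section
/- If a ∈ L²(0,1) with ∫₀¹ a(t) dt = 0 and ∫₀¹ a²(t) dt = 1, and θₙ → 0 is a sequence of positive reals, then e₀ₙ := ∫₀¹ log(1 + θₙ a(t)) dt satisfies e₀ₙ = -(θₙ²/2)(1 + o(1)), i.e., e₀ₙ/θₙ² → -1/2 as n → ∞. -/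
open MeasureTheory Filter

lemma aux_cubic (x : ℝ) (hx : |x| ≤ 1/2) :
    |Real.log (1 + x) - x + x ^ 2 / 2| ≤ 2 * |x| ^ 3 := by
  have h := Real.abs_log_sub_add_sum_range_le (x := -x) (by rw [abs_neg]; linarith) 2
  simp only [Finset.sum_range_succ, Finset.sum_range_zero] at h
  have h1 : 1 - -x = 1 + x := by ring
  rw [h1, abs_neg] at h
  norm_num at h
  have h2 : -x + x ^ 2 / 2 + Real.log (1 + x) = Real.log (1+x) - x + x^2/2 := by ring
  rw [h2] at h
  have h3 : |x| ^ 3 / (1 - |x|) ≤ 2 * |x| ^ 3 := by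
    have hx0 : (0:ℝ) ≤ |x| := abs_nonneg x
    rw [div_le_iff₀ (by linarith)]
    have h4 := mul_le_mul_of_nonneg_left hx (pow_nonneg hx0 3)
    nlinarith [pow_nonneg hx0 3, h4]
  linarith

lemma aux_quad (x : ℝ) (hx : -(1/2) ≤ x) :
    |Real.log (1 + x) - x + x ^ 2 / 2| ≤ x ^ 2 := by
  rcases le_or_gt x 0 with hx2 | hx2
  · have habs : |x| ≤ 1/2 := by rw [abs_le]; constructor <;> linarith
    have := aux_cubic x habs
    have hx0 : (0:ℝ) ≤ |x| := abs_nonneg x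
    have : 2 * |x| ^ 3 ≤ x ^ 2 := by nlinarith [sq_abs x]
    linarith [aux_cubic x habs]
  · have h1x : (0:ℝ) < 1 + x := by linarith
    have hu : Real.log (1 + x) ≤ x := by
      have := Real.log_le_sub_one_of_pos h1x; linarith
    have hl : x / (1 + x) ≤ Real.log (1 + x) := by
      have h := Real.add_one_le_exp (-Real.log (1 + x))
      rw [Real.exp_neg, Real.exp_log h1x] at h
      have h2 : (-Real.log (1+x) + 1) * (1 + x) ≤ 1 := by
        calc (-Real.log (1+x) + 1) * (1 + x) ≤ (1+x)⁻¹ * (1+x) := by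
              apply mul_le_mul_of_nonneg_right h (le_of_lt h1x)
          _ = 1 := inv_mul_cancel₀ (ne_of_gt h1x)
      rw [div_le_iff₀ h1x]; nlinarith
    rw [abs_le]; constructor
    · rw [div_le_iff₀ h1x] at hl; nlinarith
    · nlinarith

/-- If a ∈ L²(0,1), ∫ a = 0, ∫ a² = 1, θₙ → 0 positive, and 1 + θₙ a > 0 a.e.,
    then e₀ₙ = ∫₀¹ log(1 + θₙ a) dt satisfies e₀ₙ/θₙ² → -1/2. -/
theorem e0n_asymptotics (a : ℝ → ℝ)
    (ha_meas : AEMeasurable a (volume.restrict (Set.Ioo (0 : ℝ) 1)))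
    (haL2 : MemLp a 2 (volume.restrict (Set.Ioo (0 : ℝ) 1)))
    (ha0 : ∫ t in Set.Ioo (0 : ℝ) 1, a t = 0)
    (ha2 : ∫ t in Set.Ioo (0 : ℝ) 1, (a t) ^ 2 = 1)
    (θ : ℕ → ℝ) (hθpos : ∀ n, 0 < θ n)
    (hθ0 : Tendsto θ atTop (nhds 0))
    (hpos : ∀ n, ∀ᵐ t ∂(volume.restrict (Set.Ioo (0 : ℝ) 1)), 0 < 1 + θ n * a t) :
    Tendsto (fun n => (∫ t in Set.Ioo (0 : ℝ) 1, Real.log (1 + θ n * a t)) / (θ n) ^ 2)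
      atTop (nhds (-(1 / 2))) := by
  set μ := volume.restrict (Set.Ioo (0 : ℝ) 1) with hμ
  haveI : IsFiniteMeasure μ := by
    constructor
    rw [hμ, Measure.restrict_apply_univ]
    simp [Real.volume_Ioo]
  have ha_int : Integrable a μ := haL2.integrable (by norm_num)
  have ha2_int : Integrable (fun t => a t ^ 2) μ := haL2.integrable_sq
  set F : ℕ → ℝ → ℝ := fun n t =>
    (Real.log (1 + θ n * a t) - θ n * a t + (θ n) ^ 2 * a t ^ 2 / 2) / (θ n) ^ 2 with hF
  have hFmeas : ∀ n, AEStronglyMeasurable (F n) μ := by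
    intro n
    have h1 : AEMeasurable (fun t => Real.log (1 + θ n * a t)) μ :=
      Real.measurable_log.comp_aemeasurable ((ha_meas.const_mul (θ n)).const_add 1)
    exact (((h1.sub (ha_meas.const_mul (θ n))).add
      (((ha_meas.pow_const 2).const_mul ((θ n) ^ 2)).div_const 2)).div_const _).aestronglyMeasurable
  have hbd : ∀ᵐ t ∂μ, -1 < θ 0 * a t := (hpos 0).mono (fun t ht => by linarith)
  have hev : ∀ᶠ n in atTop, θ n < θ 0 / 2 :=
    hθ0.eventually_lt_const (by linarith [hθpos 0])
  have hxhalf : ∀ n t, θ n < θ 0 / 2 → -1 < θ 0 * a t → -(1/2) ≤ θ n * a t := by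
    intro n t hn ht
    rcases le_or_gt 0 (a t) with h | h
    · have : 0 ≤ θ n * a t := mul_nonneg (le_of_lt (hθpos n)) h
      linarith
    · nlinarith [hθpos n, hθpos 0]
  have hFbound : ∀ n t, θ n < θ 0 / 2 → -1 < θ 0 * a t → ‖F n t‖ ≤ a t ^ 2 := by
    intro n t hn ht
    have hθn2 : (0:ℝ) < (θ n) ^ 2 := pow_pos (hθpos n) 2
    have hq := aux_quad (θ n * a t) (hxhalf n t hn ht)
    rw [hF, Real.norm_eq_abs, abs_div, abs_of_pos hθn2, div_le_iff₀ hθn2]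
    calc |Real.log (1 + θ n * a t) - θ n * a t + (θ n) ^ 2 * a t ^ 2 / 2|
        = |Real.log (1 + θ n * a t) - θ n * a t + (θ n * a t) ^ 2 / 2| := by ring_nf
      _ ≤ (θ n * a t) ^ 2 := hq
      _ = a t ^ 2 * θ n ^ 2 := by ring
  have hDCT : Tendsto (fun n => ∫ t, F n t ∂μ) atTop (nhds (∫ _t, (0:ℝ) ∂μ)) := by
    apply tendsto_integral_filter_of_dominated_convergence (bound := fun t => a t ^ 2)
    · exact Eventually.of_forall hFmeas
    · filter_upwards [hev] with n hn
      filter_upwards [hbd] with t ht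
      exact hFbound n t hn ht
    · exact ha2_int
    · refine Eventually.of_forall (fun t => ?_)
      have hlim2 : Tendsto (fun n => 2 * θ n * |a t| ^ 3) atTop (nhds 0) := by
        have := (hθ0.const_mul 2).mul_const (|a t| ^ 3)
        simpa using this
      apply squeeze_zero_norm' _ hlim2
      have hev2 : ∀ᶠ n in atTop, θ n < 1 / (2 * (|a t| + 1)) :=
        hθ0.eventually_lt_const (by have := abs_nonneg (a t); positivity)
      filter_upwards [hev2] with n hn
      have hat : (0:ℝ) ≤ |a t| := abs_nonneg _
      have hxa : |θ n * a t| ≤ 1/2 := by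
        rw [abs_mul, abs_of_pos (hθpos n)]
        have h2 : θ n * (|a t| + 1) < 1/2 := by
          rw [lt_div_iff₀ (by positivity)] at hn
          nlinarith
        nlinarith [hθpos n]
      have hc := aux_cubic (θ n * a t) hxa
      have hθn2 : (0:ℝ) < (θ n) ^ 2 := pow_pos (hθpos n) 2
      rw [hF, Real.norm_eq_abs, abs_div, abs_of_pos hθn2, div_le_iff₀ hθn2]
      calc |Real.log (1 + θ n * a t) - θ n * a t + (θ n) ^ 2 * a t ^ 2 / 2|
          = |Real.log (1 + θ n * a t) - θ n * a t + (θ n * a t) ^ 2 / 2| := by ring_nf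
        _ ≤ 2 * |θ n * a t| ^ 3 := hc
        _ = 2 * θ n * |a t| ^ 3 * θ n ^ 2 := by
            rw [abs_mul, abs_of_pos (hθpos n)]; ring
  rw [integral_zero] at hDCT
  have hkey : ∀ n, θ n < θ 0 / 2 →
      (∫ t in Set.Ioo (0 : ℝ) 1, Real.log (1 + θ n * a t)) / (θ n) ^ 2
        = -(1/2) + ∫ t, F n t ∂μ := by
    intro n hn
    have hθn : θ n ≠ 0 := ne_of_gt (hθpos n)
    have hFint : Integrable (F n) μ := by
      refine Integrable.mono' ha2_int (hFmeas n) ?_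
      filter_upwards [hbd] with t ht
      exact hFbound n t hn ht
    have hid : ∀ t, Real.log (1 + θ n * a t)
        = (θ n) ^ 2 * F n t + θ n * a t - (θ n) ^ 2 * (a t ^ 2) / 2 := by
      intro t
      rw [hF]
      field_simp
      ring
    have hI : (∫ t in Set.Ioo (0 : ℝ) 1, Real.log (1 + θ n * a t))
        = (θ n) ^ 2 * (∫ t, F n t ∂μ) + θ n * (∫ t, a t ∂μ)
          - (θ n) ^ 2 * (∫ t, a t ^ 2 ∂μ) / 2 := by
      rw [show (∫ t in Set.Ioo (0 : ℝ) 1, Real.log (1 + θ n * a t)) = ∫ t, Real.log (1 + θ n * a t) ∂μ from rfl]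
      simp_rw [hid]
      have h1 : Integrable (fun t => (θ n) ^ 2 * F n t + θ n * a t) μ :=
        (hFint.const_mul _).add (ha_int.const_mul _)
      have h2 : Integrable (fun t => (θ n) ^ 2 * a t ^ 2 / 2) μ :=
        (ha2_int.const_mul _).div_const 2
      have h3 : (∫ t, (θ n) ^ 2 * a t ^ 2 / 2 ∂μ) = (θ n ^ 2 * ∫ t, a t ^ 2 ∂μ) / 2 := by
        simp_rw [mul_div_assoc]
        rw [integral_const_mul, integral_div]
      rw [integral_sub h1 h2, integral_add (hFint.const_mul _) (ha_int.const_mul _),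
        integral_const_mul, integral_const_mul, h3]
    have ha0' : (∫ t, a t ∂μ) = 0 := ha0
    have ha2' : (∫ t, a t ^ 2 ∂μ) = 1 := ha2
    rw [hI, ha0', ha2']
    field_simp
    ring
  have hfinal : Tendsto (fun n => -(1/2) + ∫ t, F n t ∂μ) atTop (nhds (-(1/2))) := by
    have := tendsto_const_nhds (x := (-(1/2) : ℝ)) (f := atTop (α := ℕ)) |>.add hDCT
    simpa using this
  refine hfinal.congr' ?_
  filter_upwards [hev] with n hn
  exact (hkey n hn).symm
end

section
/- If a ∈ L²(0,1) with ∫₀¹ a(t) dt = 0 and ∫₀¹ a²(t) dt = 1, and θₙ → 0 is a sequence of positive reals, then σ₀ₙ² := ∫₀¹ log²(1 + θₙ a(t)) dt - (∫₀¹ log(1 + θₙ a(t)) dt)² satisfies σ₀ₙ = θₙ(1 + o(1)), i.e., σ₀ₙ/θₙ → 1 as n → ∞. -/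
open MeasureTheory Filter

lemma aux_abs_log_le {x : ℝ} (hx : -(1/2 : ℝ) ≤ x) : |Real.log (1 + x)| ≤ 2 * |x| := by
  have hx' : 0 < 1 + x := by linarith
  have h1 : Real.log (1 + x) ≤ x := by
    have := Real.log_le_sub_one_of_pos hx'; linarith
  have h2 : 1 - (1 + x)⁻¹ ≤ Real.log (1 + x) := by
    have := Real.log_le_sub_one_of_pos (inv_pos.mpr hx')
    rw [Real.log_inv] at this; linarith
  have h3 : x / (1 + x) ≤ Real.log (1 + x) := by
    have : x / (1 + x) = 1 - (1 + x)⁻¹ := by field_simp; ring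
    linarith [h2, this.le]
  rw [abs_le]
  rcases le_or_gt 0 x with h | h
  · rw [abs_of_nonneg h]
    exact ⟨by linarith [div_nonneg h hx'.le], by linarith⟩
  · rw [abs_of_neg h]
    have h4 : 2 * x ≤ x / (1 + x) := by
      rw [le_div_iff₀ hx']; nlinarith
    exact ⟨by linarith, by linarith⟩

lemma aux_log_slope : Tendsto (fun y : ℝ => Real.log (1 + y) / y) (nhdsWithin 0 {0}ᶜ) (nhds 1) := by
  have h : HasDerivAt (fun x : ℝ => Real.log (1 + x)) 1 0 := by
    have h1 : HasDerivAt (fun x : ℝ => 1 + x) 1 0 := by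
      simpa using (hasDerivAt_id (0:ℝ)).const_add 1
    have h2 := (Real.hasDerivAt_log (by norm_num : (1:ℝ) + 0 ≠ 0)).comp 0 h1
    simpa [Function.comp_def] using h2
  apply (hasDerivAt_iff_tendsto_slope.mp h).congr'
  filter_upwards [self_mem_nhdsWithin] with y hy
  simp [slope_def_field, Real.log_one]

/-- If a ∈ L²(0,1), ∫ a = 0, ∫ a² = 1, θₙ → 0 positive, and 1 + θₙ a > 0 a.e.,
    then σ₀ₙ = √(∫ log²(1+θₙ a) - (∫ log(1+θₙ a))²) satisfies σ₀ₙ/θₙ → 1. -/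
theorem sigma0n_asymptotics (a : ℝ → ℝ)
    (ha_meas : AEMeasurable a (volume.restrict (Set.Ioo (0 : ℝ) 1)))
    (haL2 : MemLp a 2 (volume.restrict (Set.Ioo (0 : ℝ) 1)))
    (ha0 : ∫ t in Set.Ioo (0 : ℝ) 1, a t = 0)
    (ha2 : ∫ t in Set.Ioo (0 : ℝ) 1, (a t) ^ 2 = 1)
    (θ : ℕ → ℝ) (hθpos : ∀ n, 0 < θ n)
    (hθ0 : Tendsto θ atTop (nhds 0))
    (hpos : ∀ n, ∀ᵐ t ∂(volume.restrict (Set.Ioo (0 : ℝ) 1)), 0 < 1 + θ n * a t) :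
    Tendsto (fun n =>
        Real.sqrt ((∫ t in Set.Ioo (0 : ℝ) 1, (Real.log (1 + θ n * a t)) ^ 2)
          - (∫ t in Set.Ioo (0 : ℝ) 1, Real.log (1 + θ n * a t)) ^ 2) / θ n)
      atTop (nhds 1) := by
  set μ := volume.restrict (Set.Ioo (0 : ℝ) 1) with hμ
  haveI : IsFiniteMeasure μ := by
    constructor
    rw [hμ, Measure.restrict_apply_univ, Real.volume_Ioo]
    norm_num
  have ha_int : Integrable a μ := haL2.integrable one_le_two
  have ha2_int : Integrable (fun t => a t ^ 2) μ := haL2.integrable_sq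
  set g : ℕ → ℝ → ℝ := fun n t => Real.log (1 + θ n * a t) / θ n with hg
  have hmeas : ∀ n, AEStronglyMeasurable (g n) μ := by
    intro n
    exact ((Real.measurable_log.comp_aemeasurable
      ((ha_meas.const_mul (θ n)).const_add 1)).div_const _).aestronglyMeasurable
  -- eventual smallness of θ
  have hev : ∀ᶠ n in atTop, θ n < θ 0 / 2 :=
    hθ0.eventually (gt_mem_nhds (by have := hθpos 0; linarith))
  -- eventual a.e. bound |g n t| ≤ 2 |a t|
  have hbound : ∀ᶠ n in atTop, ∀ᵐ t ∂μ, |g n t| ≤ 2 * |a t| := by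
    filter_upwards [hev] with n hn
    filter_upwards [hpos n, hpos 0] with t ht ht0
    have hx : -(1/2 : ℝ) ≤ θ n * a t := by
      nlinarith [mul_pos (hθpos n) ht0, hθpos 0, hθpos n]
    have key := aux_abs_log_le hx
    have hθn := hθpos n
    calc |g n t| = |Real.log (1 + θ n * a t)| / θ n := by
          rw [hg]; simp only []; rw [abs_div, abs_of_pos hθn]
      _ ≤ (2 * |θ n * a t|) / θ n := by gcongr
      _ = 2 * |a t| := by
          rw [abs_mul, abs_of_pos hθn]; field_simp
  -- pointwise limit
  have hlim : ∀ᵐ t ∂μ, Tendsto (fun n => g n t) atTop (nhds (a t)) := by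
    refine Eventually.of_forall (fun t => ?_)
    by_cases h : a t = 0
    · simp only [hg, h, mul_zero, add_zero, Real.log_one, zero_div]
      simp [h]
    · have hy0 : Tendsto (fun n => θ n * a t) atTop (nhds 0) := by
        simpa using hθ0.mul_const (a t)
      have hy : Tendsto (fun n => θ n * a t) atTop (nhdsWithin 0 {0}ᶜ) :=
        tendsto_nhdsWithin_of_tendsto_nhds_of_eventually_within _ hy0
          (Eventually.of_forall fun n => by
            simp [mul_ne_zero (hθpos n).ne' h])
      have h1 := (aux_log_slope.comp hy).mul_const (a t)
      rw [one_mul] at h1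
      apply h1.congr
      intro n
      simp only [Function.comp_apply, hg]
      rw [div_mul_eq_mul_div, mul_div_mul_right _ _ h]
  -- limits of the two integrals
  have hA : Tendsto (fun n => ∫ t, (g n t) ^ 2 ∂μ) atTop (nhds 1) := by
    have := tendsto_integral_filter_of_dominated_convergence (μ := μ)
      (F := fun n t => (g n t) ^ 2) (f := fun t => a t ^ 2)
      (bound := fun t => (2 * |a t|) ^ 2)
      (hbound.mono fun n h => ((hmeas n).mul (hmeas n)).congr
        (Eventually.of_forall fun t => (sq (g n t)).symm))
      (by
        filter_upwards [hbound] with n h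
        filter_upwards [h] with t ht
        rw [Real.norm_eq_abs, abs_pow]
        exact pow_le_pow_left₀ (abs_nonneg _) ht 2)
      (by
        apply Integrable.congr (ha2_int.const_mul 4)
        refine Eventually.of_forall fun t => ?_
        simp only [mul_pow, sq_abs]; norm_num)
      (hlim.mono fun t ht => ht.pow 2)
    rwa [show (∫ t, a t ^ 2 ∂μ) = 1 from ha2] at this
  have hB : Tendsto (fun n => ∫ t, g n t ∂μ) atTop (nhds 0) := by
    have := tendsto_integral_filter_of_dominated_convergence (μ := μ)
      (F := g) (f := a) (bound := fun t => 2 * |a t|)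
      (Eventually.of_forall hmeas)
      (by
        filter_upwards [hbound] with n h
        filter_upwards [h] with t ht
        rwa [Real.norm_eq_abs])
      (ha_int.abs.const_mul 2)
      hlim
    rwa [show (∫ t, a t ∂μ) = 0 from ha0] at this
  -- combine
  have hfinal : Tendsto (fun n => Real.sqrt ((∫ t, (g n t) ^ 2 ∂μ) - (∫ t, g n t ∂μ) ^ 2))
      atTop (nhds 1) := by
    have h1 : Tendsto (fun n => (∫ t, (g n t) ^ 2 ∂μ) - (∫ t, g n t ∂μ) ^ 2) atTop
        (nhds (1 - 0 ^ 2)) := hA.sub (hB.pow 2)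
    norm_num at h1
    simpa using h1.sqrt
  apply hfinal.congr
  intro n
  have hθn := hθpos n
  have e2 : (∫ t, (g n t) ^ 2 ∂μ) = (∫ t in Set.Ioo (0:ℝ) 1, (Real.log (1 + θ n * a t)) ^ 2) / (θ n) ^ 2 := by
    rw [← integral_div]
    apply integral_congr_ae
    refine Eventually.of_forall fun t => ?_
    rw [hg]; simp only []
    rw [div_pow]
  have e1 : (∫ t, g n t ∂μ) = (∫ t in Set.Ioo (0:ℝ) 1, Real.log (1 + θ n * a t)) / θ n := by
    rw [← integral_div]
  rw [e1, e2, div_pow, div_sub_div_same, Real.sqrt_div' _ (sq_nonneg (θ n)),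
    Real.sqrt_sq hθn.le]
end

section
/- The function h(y) = 2(y - log(1+y))/y² for y ≠ 0 (with h(0) = 1) is positive and strictly decreasing on (-1, ∞). -/
open Real Set

private lemma log1p_hasDerivAt {y : ℝ} (hy : -1 < y) :
    HasDerivAt (fun x : ℝ => Real.log (1 + x)) (1 + y)⁻¹ y := by
  have h : HasDerivAt (fun x : ℝ => 1 + x) 1 y := (hasDerivAt_id y).const_add 1
  have := (Real.hasDerivAt_log (by linarith : (1:ℝ) + y ≠ 0)).comp y h
  rw [mul_one] at this
  exact this

private lemma phi_hasDeriv {y : ℝ} (hy : -1 < y) :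
    HasDerivAt (fun x : ℝ => 2*x - x^2 - 2*Real.log (1+x)) (2 - 2*y - 2*(1+y)⁻¹) y := by
  have h1 : HasDerivAt (fun x : ℝ => 2*x) 2 y := by
    simpa using (hasDerivAt_id y).const_mul 2
  have h2 : HasDerivAt (fun x : ℝ => x^2) (2*y) y := by
    simpa using hasDerivAt_pow 2 y
  have h3 := (log1p_hasDerivAt hy).const_mul 2
  exact (h1.sub h2).sub h3

private lemma phi_deriv_neg {y : ℝ} (hy : -1 < y) (hy0 : y ≠ 0) :
    2 - 2*y - 2*(1+y)⁻¹ < 0 := by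
  have h1 : 0 < 1 + y := by linarith
  have h2 : 2 - 2*y - 2*(1+y)⁻¹ = (-2*y^2)/(1+y) := by
    field_simp
    ring
  rw [h2]
  apply div_neg_of_neg_of_pos _ h1
  have : 0 < y^2 := pow_pos (abs_pos.mpr hy0) 2 |>.trans_le (by rw [sq_abs])
  linarith

private lemma phi_neg {y : ℝ} (hy : 0 < y) :
    2*y - y^2 - 2*Real.log (1+y) < 0 := by
  have H : StrictAntiOn (fun x : ℝ => 2*x - x^2 - 2*Real.log (1+x)) (Set.Ici 0) := by
    apply strictAntiOn_of_deriv_neg (convex_Ici 0)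
    · intro x hx
      exact (phi_hasDeriv (by simp at hx; linarith)).continuousAt.continuousWithinAt
    · intro x hx
      rw [interior_Ici] at hx
      have hx' : (0:ℝ) < x := hx
      rw [(phi_hasDeriv (by linarith)).deriv]
      exact phi_deriv_neg (by linarith) (ne_of_gt hx')
  have := H (Set.mem_Ici.mpr le_rfl) (le_of_lt hy : y ∈ Set.Ici (0:ℝ)) hy
  simpa using this

private lemma phi_pos {y : ℝ} (hy : -1 < y) (hy0 : y < 0) :
    0 < 2*y - y^2 - 2*Real.log (1+y) := by
  have H : StrictAntiOn (fun x : ℝ => 2*x - x^2 - 2*Real.log (1+x)) (Set.Ioc (-1) 0) := by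
    apply strictAntiOn_of_deriv_neg (convex_Ioc (-1) 0)
    · intro x hx
      exact (phi_hasDeriv hx.1).continuousAt.continuousWithinAt
    · intro x hx
      rw [interior_Ioc] at hx
      rw [(phi_hasDeriv hx.1).deriv]
      exact phi_deriv_neg hx.1 (ne_of_lt hx.2)
  have := H (Set.mem_Ioc.mpr ⟨hy, le_of_lt hy0⟩) (Set.mem_Ioc.mpr ⟨by linarith, le_refl 0⟩) hy0
  simpa using this

private lemma g_hasDeriv {y : ℝ} (hy : -1 < y) :
    HasDerivAt (fun x : ℝ => x^2/(1+x) + 2*Real.log (1+x) - 2*x)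
      ((2*y*(1+y) - y^2*1)/(1+y)^2 + 2*(1+y)⁻¹ - 2) y := by
  have h0 : (1:ℝ) + y ≠ 0 := by linarith
  have h1 : HasDerivAt (fun x : ℝ => x^2) (2*y) y := by simpa using hasDerivAt_pow 2 y
  have h2 : HasDerivAt (fun x : ℝ => 1 + x) 1 y := (hasDerivAt_id y).const_add 1
  have h3 := h1.div h2 h0
  have h4 := (log1p_hasDerivAt hy).const_mul 2
  have h5 : HasDerivAt (fun x : ℝ => 2*x) 2 y := by simpa using (hasDerivAt_id y).const_mul 2
  exact (h3.add h4).sub h5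

private lemma g_deriv_neg {y : ℝ} (hy : -1 < y) (hy0 : y ≠ 0) :
    (2*y*(1+y) - y^2*1)/(1+y)^2 + 2*(1+y)⁻¹ - 2 < 0 := by
  have h1 : 0 < 1 + y := by linarith
  have h2 : (2*y*(1+y) - y^2*1)/(1+y)^2 + 2*(1+y)⁻¹ - 2 = -(y^2)/(1+y)^2 := by
    field_simp
    ring
  rw [h2]
  apply div_neg_of_neg_of_pos
  · have : 0 < y^2 := by positivity
    linarith
  · positivity

private lemma g_neg {y : ℝ} (hy : 0 < y) :
    y^2/(1+y) + 2*Real.log (1+y) - 2*y < 0 := by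
  have H : StrictAntiOn (fun x : ℝ => x^2/(1+x) + 2*Real.log (1+x) - 2*x) (Set.Ici 0) := by
    apply strictAntiOn_of_deriv_neg (convex_Ici 0)
    · intro x hx
      exact (g_hasDeriv (by simp at hx; linarith)).continuousAt.continuousWithinAt
    · intro x hx
      rw [interior_Ici] at hx
      have hx' : (0:ℝ) < x := hx
      rw [(g_hasDeriv (by linarith)).deriv]
      exact g_deriv_neg (by linarith) (ne_of_gt hx')
  have := H (Set.mem_Ici.mpr le_rfl) (le_of_lt hy : y ∈ Set.Ici (0:ℝ)) hy
  simpa using this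

private lemma g_pos {y : ℝ} (hy : -1 < y) (hy0 : y < 0) :
    0 < y^2/(1+y) + 2*Real.log (1+y) - 2*y := by
  have H : StrictAntiOn (fun x : ℝ => x^2/(1+x) + 2*Real.log (1+x) - 2*x) (Set.Ioc (-1) 0) := by
    apply strictAntiOn_of_deriv_neg (convex_Ioc (-1) 0)
    · intro x hx
      exact (g_hasDeriv hx.1).continuousAt.continuousWithinAt
    · intro x hx
      rw [interior_Ioc] at hx
      rw [(g_hasDeriv hx.1).deriv]
      exact g_deriv_neg hx.1 (ne_of_lt hx.2)
  have := H (Set.mem_Ioc.mpr ⟨hy, le_of_lt hy0⟩) (Set.mem_Ioc.mpr ⟨by linarith, le_refl 0⟩) hy0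
  simpa using this

noncomputable def Hfun (y : ℝ) : ℝ := 2 * (y - Real.log (1 + y)) / y ^ 2

private lemma Hfun_hasDeriv {y : ℝ} (hy : -1 < y) (hy0 : y ≠ 0) :
    HasDerivAt Hfun
      ((2*(1 - (1+y)⁻¹) * y^2 - 2*(y - Real.log (1+y)) * (2*y)) / (y^2)^2) y := by
  have h1 : HasDerivAt (fun x : ℝ => 2*(x - Real.log (1+x))) (2*(1 - (1+y)⁻¹)) y := by
    exact ((hasDerivAt_id y).sub (log1p_hasDerivAt hy)).const_mul 2
  have h2 : HasDerivAt (fun x : ℝ => x^2) (2*y) y := by simpa using hasDerivAt_pow 2 y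
  exact h1.div h2 (pow_ne_zero 2 hy0)

private lemma Hfun_deriv_neg {y : ℝ} (hy : -1 < y) (hy0 : y ≠ 0) :
    (2*(1 - (1+y)⁻¹) * y^2 - 2*(y - Real.log (1+y)) * (2*y)) / (y^2)^2 < 0 := by
  have h1 : 0 < 1 + y := by linarith
  set L := Real.log (1+y) with hL
  have key : 2*(1 - (1+y)⁻¹) * y^2 - 2*(y - L) * (2*y)
      = 2*y*(y^2/(1+y) + 2*L - 2*y) := by
    field_simp
    ring
  rw [key]
  apply div_neg_of_neg_of_pos
  · rcases lt_or_gt_of_ne hy0 with h | h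
    · have hg := g_pos hy h
      have : 0 < y^2/(1+y) + 2*L - 2*y := by linarith [hg]
      nlinarith
    · have hg := g_neg h
      have : y^2/(1+y) + 2*L - 2*y < 0 := by linarith [hg]
      nlinarith
  · positivity

private lemma Hfun_anti_pos : StrictAntiOn Hfun (Set.Ioi (0:ℝ)) := by
  apply strictAntiOn_of_deriv_neg (convex_Ioi 0)
  · intro x hx
    have hx' : (0:ℝ) < x := hx
    exact (Hfun_hasDeriv (by linarith) (ne_of_gt hx')).continuousAt.continuousWithinAt
  · intro x hx
    rw [interior_Ioi] at hx
    rw [(Hfun_hasDeriv (by linarith [mem_Ioi.mp hx]) (ne_of_gt hx)).deriv]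
    exact Hfun_deriv_neg (by linarith [mem_Ioi.mp hx]) (ne_of_gt hx)

private lemma Hfun_anti_neg : StrictAntiOn Hfun (Set.Ioo (-1:ℝ) 0) := by
  apply strictAntiOn_of_deriv_neg (convex_Ioo (-1) 0)
  · intro x hx
    exact (Hfun_hasDeriv hx.1 (ne_of_lt hx.2)).continuousAt.continuousWithinAt
  · intro x hx
    rw [interior_Ioo] at hx
    rw [(Hfun_hasDeriv hx.1 (ne_of_lt hx.2)).deriv]
    exact Hfun_deriv_neg hx.1 (ne_of_lt hx.2)

private lemma log_lt_self' {y : ℝ} (hy : -1 < y) (hy0 : y ≠ 0) : Real.log (1 + y) < y := by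
  have h1 : (0:ℝ) < 1 + y := by linarith
  have h2 := Real.add_one_lt_exp hy0
  have h3 := Real.log_lt_log h1 (by linarith : 1 + y < Real.exp y)
  rwa [Real.log_exp] at h3

private lemma Hfun_gt_one {y : ℝ} (hy : -1 < y) (hy0 : y < 0) : 1 < Hfun y := by
  have h2 : (0:ℝ) < y^2 := by nlinarith
  rw [Hfun, one_lt_div h2]
  have := phi_pos hy hy0
  linarith

private lemma Hfun_lt_one {y : ℝ} (hy0 : 0 < y) : Hfun y < 1 := by
  have h2 : (0:ℝ) < y^2 := by positivity
  rw [Hfun, div_lt_one h2]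
  have := phi_neg hy0
  linarith

/-- The function h(y) = 2(y - log(1+y))/y² (with h(0)=1) is positive and
    strictly decreasing on (-1, ∞). -/
theorem h_pos_strictAnti :
    let h : ℝ → ℝ := fun y => if y = 0 then 1 else 2 * (y - Real.log (1 + y)) / y ^ 2
    (∀ y ∈ Set.Ioi (-1 : ℝ), 0 < h y) ∧ StrictAntiOn h (Set.Ioi (-1 : ℝ)) := by
  intro h
  have hH : ∀ y : ℝ, y ≠ 0 → h y = Hfun y := by
    intro y hy0
    simp [h, Hfun, hy0]
  constructor
  · intro y hy
    rcases eq_or_ne y 0 with rfl | hy0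
    · simp [h]
    · rw [hH y hy0]
      have hy' : -1 < y := hy
      have hlog := log_lt_self' hy' hy0
      have : (0:ℝ) < y^2 := by positivity
      rw [Hfun]
      apply div_pos (by linarith) this
  · intro x hx y hy hxy
    have hx' : (-1:ℝ) < x := hx
    have hy' : (-1:ℝ) < y := hy
    rcases lt_trichotomy x 0 with hx0 | hx0 | hx0
    · rcases lt_trichotomy y 0 with hy0 | hy0 | hy0
      · rw [hH x (ne_of_lt hx0), hH y (ne_of_lt hy0)]
        exact Hfun_anti_neg ⟨hx', hx0⟩ ⟨hy', hy0⟩ hxy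
      · subst hy0
        rw [hH x (ne_of_lt hx0)]
        simpa [h] using Hfun_gt_one hx' hx0
      · rw [hH x (ne_of_lt hx0), hH y (ne_of_gt hy0)]
        exact lt_trans (Hfun_lt_one hy0) (Hfun_gt_one hx' hx0)
    · subst hx0
      have hy0 : 0 < y := hxy
      rw [hH y (ne_of_gt hy0)]
      simpa [h] using Hfun_lt_one hy0
    · have hy0 : 0 < y := lt_trans hx0 hxy
      rw [hH x (ne_of_gt hx0), hH y (ne_of_gt hy0)]
      exact Hfun_anti_pos hx0 hy0 hxy
end

section
/- (Mogulskii's inequality) Let P, Q be probability measures on ℝ with Q ≪ P, let ξ₁,…,ξₙ be i.i.d. with law P and η₁,…,ηₙ i.i.d. with law Q. Then for every Borel set A ⊆ ℝ, every M ∈ ℝ, and every n ≥ 1: Pr((ξ₁+⋯+ξₙ)/n ∈ A)(1 - e^{-M}) + e^{-M} ≥ exp{-n D(Q‖P) - M pₙ}, where pₙ = Pr(η₁+⋯+ηₙ ∈ n·Aᶜ) and D(Q‖P) is the Kullback–Leibler divergence. -/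
open MeasureTheory

lemma mog_lintegral_pi_fin : ∀ {n : ℕ} (μ : Fin n → Measure ℝ) [∀ i, IsProbabilityMeasure (μ i)]
    (f : Fin n → ℝ → ENNReal), (∀ i, Measurable (f i)) →
    ∫⁻ x, ∏ i, f i (x i) ∂Measure.pi μ = ∏ i, ∫⁻ y, f i y ∂(μ i) := by
  intro n
  induction n with
  | zero => intro μ _ f hf; simp
  | succ n ih =>
    intro μ _ f hf
    have h := measurePreserving_piFinSuccAbove μ 0
    have hg : Measurable (fun p : ℝ × (Fin n → ℝ) => f 0 p.1 * ∏ j, f (Fin.succ j) (p.2 j)) :=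
      ((hf 0).comp measurable_fst).mul
        (Finset.measurable_prod _ fun j _ => (hf _).comp ((measurable_pi_apply j).comp measurable_snd))
    calc ∫⁻ x, ∏ i, f i (x i) ∂Measure.pi μ
        = ∫⁻ x, (fun p : ℝ × (Fin n → ℝ) => f 0 p.1 * ∏ j, f (Fin.succ j) (p.2 j))
            ((MeasurableEquiv.piFinSuccAbove (fun _ => ℝ) 0) x) ∂Measure.pi μ := by
          refine lintegral_congr fun x => ?_
          simp [MeasurableEquiv.piFinSuccAbove, Fin.prod_univ_succ, Fin.zero_succAbove, Fin.tail]
      _ = ∫⁻ p, f 0 p.1 * ∏ j, f (Fin.succ j) (p.2 j)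
            ∂((μ 0).prod (Measure.pi fun j => μ ((0 : Fin (n+1)).succAbove j))) := h.lintegral_comp hg
      _ = (∫⁻ y, f 0 y ∂μ 0) * ∫⁻ y, ∏ j, f (Fin.succ j) (y j) ∂(Measure.pi fun j => μ (Fin.succ j)) := by
          simp_rw [Fin.zero_succAbove]
          exact lintegral_prod_mul (hf 0).aemeasurable
            (Finset.measurable_prod _ fun j _ => (hf _).comp (measurable_pi_apply j)).aemeasurable
      _ = ∏ i, ∫⁻ y, f i y ∂(μ i) := by
          rw [ih _ _ (fun j => hf _), Fin.prod_univ_succ]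

lemma mog_pi_map_eval {n : ℕ} (μ : Measure ℝ) [IsProbabilityMeasure μ] (i : Fin n) :
    (Measure.pi fun _ : Fin n => μ).map (Function.eval i) = μ := by
  ext s hs
  rw [Measure.map_apply (measurable_pi_apply i) hs, Set.eval_preimage, Measure.pi_pi]
  simp [Function.update_apply, apply_ite μ]

lemma mog_pi_withDensity_eq {n : ℕ} (P Q : Measure ℝ) [IsProbabilityMeasure P]
    [IsProbabilityMeasure Q] (ρ : ℝ → ENNReal) (hρ : Measurable ρ)
    (hQ : P.withDensity ρ = Q) :
    Measure.pi (fun _ : Fin n => Q)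
      = (Measure.pi fun _ : Fin n => P).withDensity (fun x => ∏ i, ρ (x i)) := by
  refine Measure.pi_eq (μ := fun _ : Fin n => Q) fun s hs => ?_
  rw [withDensity_apply _ (MeasurableSet.univ_pi hs),
    ← lintegral_indicator (MeasurableSet.univ_pi hs) _]
  have hind : ∀ x : Fin n → ℝ, (Set.pi Set.univ s).indicator (fun x => ∏ i, ρ (x i)) x
      = ∏ i, (s i).indicator ρ (x i) := by
    intro x
    by_cases hx : x ∈ Set.pi Set.univ s
    · rw [Set.indicator_of_mem hx]
      exact Finset.prod_congr rfl fun i _ => (Set.indicator_of_mem (hx i (Set.mem_univ i)) ρ).symm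
    · rw [Set.indicator_of_notMem hx]
      obtain ⟨i, -, hi⟩ : ∃ i ∈ Set.univ, x i ∉ s i := by simpa [Set.mem_pi] using hx
      exact (Finset.prod_eq_zero (Finset.mem_univ i) (Set.indicator_of_notMem hi ρ)).symm
  simp_rw [hind]
  rw [mog_lintegral_pi_fin _ _ (fun i => hρ.indicator (hs i))]
  refine Finset.prod_congr rfl fun i _ => ?_
  rw [lintegral_indicator (hs i) _, ← withDensity_apply _ (hs i), hQ]

/-- Mogulskii's inequality: for Q ≪ P with finite KL divergence D(Q‖P), a Borel
    set A, M ∈ ℝ and n ≥ 1,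
    Pr_P((ξ₁+⋯+ξₙ)/n ∈ A)(1 - e^{-M}) + e^{-M} ≥ exp(-n D(Q‖P) - M pₙ),
    where pₙ = Pr_Q(η₁+⋯+ηₙ ∈ n·Aᶜ), stated on the n-fold product measures. -/
theorem mogulskii_inequality (P Q : Measure ℝ)
    [IsProbabilityMeasure P] [IsProbabilityMeasure Q]
    (hac : Q ≪ P)
    (hD : Integrable (fun y => Real.log (Q.rnDeriv P y).toReal) Q)
    (A : Set ℝ) (hA : MeasurableSet A) (M : ℝ) (n : ℕ) (hn : 1 ≤ n) :
    (Measure.pi (fun _ : Fin n => P)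
        {x | (∑ i, x i) / (n : ℝ) ∈ A}).toReal * (1 - Real.exp (-M)) + Real.exp (-M)
      ≥ Real.exp (-(n : ℝ) * (∫ y, Real.log (Q.rnDeriv P y).toReal ∂Q)
          - M * (Measure.pi (fun _ : Fin n => Q)
              {x | ∑ i, x i ∈ (fun y => (n : ℝ) * y) '' Aᶜ}).toReal) := by
  set ρ := Q.rnDeriv P with hρdef
  have hρ : Measurable ρ := Measure.measurable_rnDeriv Q P
  have hQ : P.withDensity ρ = Q := Measure.withDensity_rnDeriv_eq Q P hac
  set μ := Measure.pi (fun _ : Fin n => P) with hμdef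
  set ν := Measure.pi (fun _ : Fin n => Q) with hνdef
  set f := fun x : Fin n → ℝ => ∏ i, ρ (x i) with hfdef
  have hf : Measurable f := Finset.measurable_prod _ fun i _ => hρ.comp (measurable_pi_apply i)
  have hν : ν = μ.withDensity f := mog_pi_withDensity_eq P Q ρ hρ hQ
  set S := {x : Fin n → ℝ | (∑ i, x i) / (n : ℝ) ∈ A} with hSdef
  have hS : MeasurableSet S :=
    ((Finset.measurable_sum _ fun i _ => measurable_pi_apply i).div_const _) hA
  have hn0 : (n : ℝ) ≠ 0 := Nat.cast_ne_zero.mpr (by omega)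
  have hset : {x : Fin n → ℝ | ∑ i, x i ∈ (fun y => (n : ℝ) * y) '' Aᶜ} = Sᶜ := by
    ext x
    simp only [Set.mem_setOf_eq, Set.mem_image, Set.mem_compl_iff, hSdef]
    constructor
    · rintro ⟨y, hy, hxy⟩ hmem
      have hy' : (∑ i, x i) / (n : ℝ) = y := by field_simp [← hxy]; exact hxy.symm
      exact hy (hy' ▸ hmem)
    · intro hmem
      exact ⟨(∑ i, x i) / (n : ℝ), hmem, by field_simp⟩
  set ℓ := fun y : ℝ => Real.log (ρ y).toReal with hℓdef
  have hℓ : Measurable ℓ := Real.measurable_log.comp hρ.ennreal_toReal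
  set D := ∫ y, ℓ y ∂Q with hDdef
  set g := Sᶜ.indicator (fun _ : Fin n → ℝ => -M) with hgdef
  have hgmeas : Measurable g := measurable_const.indicator hS.compl
  set L := fun x : Fin n → ℝ => ∑ i, ℓ (x i) with hLdef
  have hLmeas : Measurable L := Finset.measurable_sum _ fun i _ => hℓ.comp (measurable_pi_apply i)
  set h := fun x => g x - L x with hhdef
  have hhmeas : Measurable h := hgmeas.sub hLmeas
  -- integrability of L w.r.t. ν
  have hLint : ∀ i : Fin n, Integrable (fun x : Fin n → ℝ => ℓ (x i)) ν := by
    intro i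
    have h1 : Integrable ℓ (ν.map (Function.eval i)) := by rw [hνdef, mog_pi_map_eval]; exact hD
    exact (integrable_map_measure hℓ.aestronglyMeasurable
      (measurable_pi_apply i).aemeasurable).mp h1
  have hLint' : Integrable L ν := integrable_finset_sum _ fun i _ => hLint i
  have hgint : Integrable g ν := (integrable_const (-M)).indicator hS.compl
  have hhint : Integrable h ν := hgint.sub hLint'
  have hIL : ∫ x, L x ∂ν = (n : ℝ) * D := by
    rw [hLdef, integral_finset_sum _ fun i _ => hLint i]
    have heach : ∀ i : Fin n, ∫ x, ℓ (x i) ∂ν = D := by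
      intro i
      have : ∫ y, ℓ y ∂(ν.map (Function.eval i)) = ∫ x, ℓ (Function.eval i x) ∂ν :=
        integral_map (measurable_pi_apply i).aemeasurable hℓ.aestronglyMeasurable
      rw [hνdef, mog_pi_map_eval] at this
      exact this.symm
    rw [Finset.sum_congr rfl fun i _ => heach i]
    simp [mul_comm]
  set q := (ν Sᶜ).toReal with hqdef
  have hIg : ∫ x, g x ∂ν = -M * q := by
    rw [hgdef, integral_indicator_const _ hS.compl]
    simp [hqdef, mul_comm, measureReal_def]
  set c := -M * q - (n : ℝ) * D with hcdef
  have hIh : ∫ x, h x ∂ν = c := by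
    rw [hhdef, integral_sub hgint hLint', hIg, hIL]
  -- tangent line bound
  set u := fun x => Real.exp c * ((1 - c) + h x) with hudef
  have huint : Integrable u ν := ((integrable_const (1 - c)).add hhint).const_mul _
  have hIu : ∫ x, u x ∂ν = Real.exp c := by
    rw [hudef, integral_const_mul, integral_add (integrable_const _) hhint, hIh, integral_const]
    simp
  have hu_le : ∀ x, u x ≤ Real.exp (h x) := by
    intro x
    have h1 : (h x - c) + 1 ≤ Real.exp (h x - c) := Real.add_one_le_exp _
    calc u x = Real.exp c * ((h x - c) + 1) := by ring
      _ ≤ Real.exp c * Real.exp (h x - c) :=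
        mul_le_mul_of_nonneg_left h1 (Real.exp_pos c).le
      _ = Real.exp (h x) := by rw [← Real.exp_add]; ring_nf
  set v := fun x => max (u x) 0 with hvdef
  have hvint : Integrable v ν := huint.pos_part
  have step1 : ENNReal.ofReal (Real.exp c) ≤ ∫⁻ x, ENNReal.ofReal (Real.exp (h x)) ∂ν := by
    calc ENNReal.ofReal (Real.exp c) = ENNReal.ofReal (∫ x, u x ∂ν) := by rw [hIu]
      _ ≤ ENNReal.ofReal (∫ x, v x ∂ν) :=
        ENNReal.ofReal_le_ofReal (integral_mono huint hvint fun x => le_max_left _ _)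
      _ = ∫⁻ x, ENNReal.ofReal (v x) ∂ν :=
        ofReal_integral_eq_lintegral_ofReal hvint (Filter.Eventually.of_forall fun x => le_max_right _ _)
      _ ≤ ∫⁻ x, ENNReal.ofReal (Real.exp (h x)) ∂ν := by
        refine lintegral_mono fun x => ENNReal.ofReal_le_ofReal ?_
        exact max_le (hu_le x) (Real.exp_pos _).le
  have step2 : ∫⁻ x, ENNReal.ofReal (Real.exp (h x)) ∂ν
      = ∫⁻ x, f x * ENNReal.ofReal (Real.exp (h x)) ∂μ := by
    rw [hν, lintegral_withDensity_eq_lintegral_mul μ hf hhmeas.exp.ennreal_ofReal]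
    rfl
  -- a.e. finiteness of the coordinates of the density
  have hfin : ∀ᵐ x ∂μ, ∀ i, ρ (x i) < ⊤ := by
    rw [ae_all_iff]
    intro i
    have hP : ∀ᵐ y ∂(μ.map (Function.eval i)), ρ y < ⊤ := by
      rw [hμdef, mog_pi_map_eval]; exact Measure.rnDeriv_lt_top Q P
    have hev : Measurable (Function.eval i : (Fin n → ℝ) → ℝ) := measurable_pi_apply i
    exact (ae_map_iff hev.aemeasurable (measurableSet_lt hρ measurable_const)).mp hP
  have step3 : ∫⁻ x, f x * ENNReal.ofReal (Real.exp (h x)) ∂μ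
      ≤ ∫⁻ x, ENNReal.ofReal (Real.exp (g x)) ∂μ := by
    refine lintegral_mono_ae (hfin.mono fun x hx => ?_)
    by_cases h0 : f x = 0
    · simp [h0]
    · have hne : ∀ i : Fin n, ρ (x i) ≠ 0 := by
        intro i hz
        exact h0 (Finset.prod_eq_zero (Finset.mem_univ i) hz)
      have hapos : ∀ i : Fin n, 0 < (ρ (x i)).toReal :=
        fun i => ENNReal.toReal_pos (hne i) (hx i).ne
      have hfx_ne_top : f x ≠ ⊤ := by
        rw [hfdef]
        exact (ENNReal.prod_lt_top fun i _ => hx i).ne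
      have hfxr : (f x).toReal = ∏ i, (ρ (x i)).toReal := ENNReal.toReal_prod _ _
      have hprodpos : (0 : ℝ) < ∏ i, (ρ (x i)).toReal :=
        Finset.prod_pos fun i _ => hapos i
      have hexpL : Real.exp (-L x) = (∏ i, (ρ (x i)).toReal)⁻¹ := by
        have hLx : L x = Real.log (∏ i, (ρ (x i)).toReal) :=
          (Real.log_prod fun i _ => (hapos i).ne').symm
        rw [hLx, ← Real.log_inv, Real.exp_log (by positivity)]
      have key : (f x).toReal * Real.exp (h x) = Real.exp (g x) := by
        have : Real.exp (h x) = Real.exp (g x) * Real.exp (-L x) := by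
          rw [← Real.exp_add, hhdef]; ring_nf
        rw [this, hexpL, hfxr]
        field_simp
      refine le_of_eq ?_
      calc f x * ENNReal.ofReal (Real.exp (h x))
          = ENNReal.ofReal ((f x).toReal) * ENNReal.ofReal (Real.exp (h x)) := by
            rw [ENNReal.ofReal_toReal hfx_ne_top]
        _ = ENNReal.ofReal ((f x).toReal * Real.exp (h x)) :=
            (ENNReal.ofReal_mul ENNReal.toReal_nonneg).symm
        _ = ENNReal.ofReal (Real.exp (g x)) := by rw [key]
  -- compute the integral of exp ∘ g
  have hgexp : (fun x => Real.exp (g x))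
      = fun x => Sᶜ.indicator (fun _ : Fin n → ℝ => Real.exp (-M) - 1) x + 1 := by
    funext x
    by_cases hx : x ∈ Sᶜ
    · rw [hgdef]
      rw [Set.indicator_of_mem hx, Set.indicator_of_mem hx]
      ring
    · rw [hgdef]
      rw [Set.indicator_of_notMem hx, Set.indicator_of_notMem hx]
      simp
  have hexpint : Integrable (fun x => Real.exp (g x)) μ := by
    rw [hgexp]
    exact ((integrable_const _).indicator hS.compl).add (integrable_const 1)
  set p := (μ S).toReal with hpdef
  have hμSc : (μ Sᶜ).toReal = 1 - p := by
    rw [measure_compl hS (measure_ne_top μ S)]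
    rw [measure_univ]
    rw [ENNReal.toReal_sub_of_le prob_le_one ENNReal.one_ne_top]
    simp [hpdef]
  have hIexp : ∫ x, Real.exp (g x) ∂μ = p * (1 - Real.exp (-M)) + Real.exp (-M) := by
    rw [hgexp, integral_add ((integrable_const _).indicator hS.compl) (integrable_const 1),
      integral_indicator_const _ hS.compl, integral_const]
    simp only [measureReal_def, measure_univ, ENNReal.toReal_one, one_smul, smul_eq_mul, hμSc]
    ring
  have step4 : ∫⁻ x, ENNReal.ofReal (Real.exp (g x)) ∂μ
      = ENNReal.ofReal (p * (1 - Real.exp (-M)) + Real.exp (-M)) := by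
    rw [← hIexp]
    exact (ofReal_integral_eq_lintegral_ofReal hexpint
      (Filter.Eventually.of_forall fun x => (Real.exp_pos _).le)).symm
  have hfinal : ENNReal.ofReal (Real.exp c)
      ≤ ENNReal.ofReal (p * (1 - Real.exp (-M)) + Real.exp (-M)) := by
    calc ENNReal.ofReal (Real.exp c) ≤ ∫⁻ x, ENNReal.ofReal (Real.exp (h x)) ∂ν := step1
      _ = ∫⁻ x, f x * ENNReal.ofReal (Real.exp (h x)) ∂μ := step2
      _ ≤ ∫⁻ x, ENNReal.ofReal (Real.exp (g x)) ∂μ := step3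
      _ = _ := step4
  have hLHS_nonneg : 0 ≤ p * (1 - Real.exp (-M)) + Real.exp (-M) := by
    rw [← hIexp]
    exact integral_nonneg fun x => (Real.exp_pos _).le
  have hmain : Real.exp c ≤ p * (1 - Real.exp (-M)) + Real.exp (-M) :=
    (ENNReal.ofReal_le_ofReal_iff hLHS_nonneg).mp hfinal
  rw [ge_iff_le, hset]
  have hceq : -(n : ℝ) * D - M * q = c := by rw [hcdef]; ring
  calc Real.exp (-(n : ℝ) * D - M * (ν Sᶜ).toReal) = Real.exp c := by rw [← hqdef, hceq]
    _ ≤ p * (1 - Real.exp (-M)) + Real.exp (-M) := hmain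
end

section
/- (Classical moderate deviation theorem, upper bound) Let ξ₁, ξ₂, … be i.i.d. real random variables with Eξ₁ = 0, Var ξ₁ = 1, and φ(λ) = E e^{λξ₁} < ∞ for λ ∈ [0, Λ], Λ > 0. If xₙ > 0, xₙ → 0 and n xₙ² → ∞, then limsup_{n→∞} (1/(n xₙ²)) log Pr(Σᵢ₌₁ⁿ ξᵢ ≥ n xₙ) ≤ -1/2. -/
open MeasureTheory ProbabilityTheory Filter


lemma md_hasDerivAt_s (u : ℝ) :
    HasDerivAt (fun v : ℝ => Real.exp v - 1 - v - v^2/2) (Real.exp u - 1 - u) u := by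
  have h := (((Real.hasDerivAt_exp u).sub_const 1).sub (hasDerivAt_id u)).sub
    ((hasDerivAt_pow 2 u).div_const 2)
  refine h.congr_deriv ?_
  norm_num

lemma md_s_nonneg {u : ℝ} (hu : 0 ≤ u) : u^2/2 ≤ Real.exp u - 1 - u := by
  have hmono : Monotone (fun v : ℝ => Real.exp v - 1 - v - v^2/2) :=
    monotone_of_deriv_nonneg (fun v => (md_hasDerivAt_s v).differentiableAt)
      (fun v => by rw [(md_hasDerivAt_s v).deriv]; nlinarith [Real.add_one_le_exp v])
  have h := hmono hu
  simp only [Real.exp_zero] at h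
  nlinarith [h]

lemma md_s_nonpos {u : ℝ} (hu : u ≤ 0) : Real.exp u - 1 - u ≤ u^2/2 := by
  have hmono : Monotone (fun v : ℝ => Real.exp v - 1 - v - v^2/2) :=
    monotone_of_deriv_nonneg (fun v => (md_hasDerivAt_s v).differentiableAt)
      (fun v => by rw [(md_hasDerivAt_s v).deriv]; nlinarith [Real.add_one_le_exp v])
  have h := hmono hu
  simp only [Real.exp_zero] at h
  nlinarith [h]

lemma md_hasDerivAt_r (u : ℝ) :
    HasDerivAt (fun v : ℝ => Real.exp v - 1 - v - v^2/2 * Real.exp v)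
      (Real.exp u * (1 - u - u^2/2) - 1) u := by
  have h := (((Real.hasDerivAt_exp u).sub_const 1).sub (hasDerivAt_id u)).sub
    (((hasDerivAt_pow 2 u).div_const 2).mul (Real.hasDerivAt_exp u))
  refine h.congr_deriv ?_
  norm_num
  ring

lemma md_r_deriv_nonpos (u : ℝ) : Real.exp u * (1 - u - u^2/2) - 1 ≤ 0 := by
  have h1 : 1 - u ≤ Real.exp (-u) := by linarith [Real.add_one_le_exp (-u)]
  have h2 : Real.exp (-u) * Real.exp u = 1 := by rw [← Real.exp_add]; simp
  have h3 : (0:ℝ) < Real.exp u := Real.exp_pos u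
  nlinarith [mul_le_mul_of_nonneg_right h1 h3.le, sq_nonneg u]

lemma md_r_anti : Antitone (fun v : ℝ => Real.exp v - 1 - v - v^2/2 * Real.exp v) :=
  antitone_of_deriv_nonpos (fun v => (md_hasDerivAt_r v).differentiableAt)
    (fun v => by rw [(md_hasDerivAt_r v).deriv]; exact md_r_deriv_nonpos v)

lemma md_lower (u : ℝ) : u^2/2 * Real.exp (min u 0) ≤ Real.exp u - 1 - u := by
  rcases le_total 0 u with hu | hu
  · rw [min_eq_right hu, Real.exp_zero, mul_one]
    exact md_s_nonneg hu
  · rw [min_eq_left hu]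
    have h := md_r_anti hu
    simp only [Real.exp_zero] at h
    nlinarith [h]

lemma md_upper (u : ℝ) : Real.exp u - 1 - u ≤ u^2/2 * Real.exp (max u 0) := by
  rcases le_total 0 u with hu | hu
  · rw [max_eq_left hu]
    have h := md_r_anti hu
    simp only [Real.exp_zero] at h
    nlinarith [h]
  · rw [max_eq_right hu, Real.exp_zero, mul_one]
    exact md_s_nonpos hu

lemma md_nonneg (u : ℝ) : 0 ≤ Real.exp u - 1 - u := by
  nlinarith [Real.add_one_le_exp u]

open MeasureTheory ProbabilityTheory Filter in
lemma md_tendsto {Ω : Type*} [MeasureSpace Ω] [IsProbabilityMeasure (ℙ : Measure Ω)]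
    (f : Ω → ℝ) (hf : Measurable f)
    (hf2 : Integrable (fun ω => (f ω)^2) ℙ)
    {Λ' : ℝ} (hΛ' : 0 < Λ')
    (hint : Integrable (fun ω => (f ω)^2 * Real.exp (Λ' * f ω)) ℙ)
    (t : ℕ → ℝ) (ht0 : Tendsto t atTop (nhds 0))
    (htc : ∀ᶠ n in atTop, 0 < t n ∧ t n ≤ Λ') :
    Tendsto (fun n => (∫ ω, (Real.exp (t n * f ω) - 1 - t n * f ω)) / (t n)^2)
      atTop (nhds ((∫ ω, (f ω)^2) / 2)) := by
  have key : Tendsto (fun n => ∫ ω, (Real.exp (t n * f ω) - 1 - t n * f ω) / (t n)^2)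
      atTop (nhds (∫ ω, (f ω)^2 / 2)) := by
    apply tendsto_integral_filter_of_dominated_convergence
      (bound := fun ω => (f ω)^2/2 * (1 + Real.exp (Λ' * f ω)))
    · apply Eventually.of_forall
      intro n
      exact ((((hf.const_mul (t n)).exp.sub measurable_const).sub
        (hf.const_mul (t n))).div_const _).aestronglyMeasurable
    · filter_upwards [htc] with n hn
      apply ae_of_all
      intro ω
      have hnn : 0 ≤ (Real.exp (t n * f ω) - 1 - t n * f ω) / (t n)^2 :=
        div_nonneg (md_nonneg _) (sq_nonneg _)
      rw [Real.norm_of_nonneg hnn]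
      have h := md_upper (t n * f ω)
      rw [mul_pow] at h
      have h2 : Real.exp (max (t n * f ω) 0) ≤ 1 + Real.exp (Λ' * f ω) := by
        rcases le_total 0 (f ω) with hfω | hfω
        · have : max (t n * f ω) 0 ≤ Λ' * f ω := by
            apply max_le (mul_le_mul_of_nonneg_right hn.2 hfω)
            positivity
          calc Real.exp (max (t n * f ω) 0) ≤ Real.exp (Λ' * f ω) := Real.exp_le_exp.2 this
            _ ≤ 1 + Real.exp (Λ' * f ω) := by linarith
        · have : max (t n * f ω) 0 = 0 := by
            apply max_eq_right
            exact mul_nonpos_of_nonneg_of_nonpos hn.1.le hfω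
          rw [this, Real.exp_zero]
          linarith [Real.exp_pos (Λ' * f ω)]
      rw [div_le_iff₀ (pow_pos hn.1 2)]
      have h3 := mul_le_mul_of_nonneg_left h2
        (by positivity : (0:ℝ) ≤ t n ^ 2 * f ω ^ 2 / 2)
      nlinarith [h3]
    · have heq : (fun ω => (f ω)^2/2 * (1 + Real.exp (Λ' * f ω)))
          = fun ω => ((f ω)^2 + (f ω)^2 * Real.exp (Λ' * f ω))/2 := by
        funext ω; ring
      rw [heq]
      exact (hf2.add hint).div_const 2
    · apply ae_of_all
      intro ω
      have hu : Tendsto (fun n => t n * f ω) atTop (nhds 0) := by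
        simpa using ht0.mul_const (f ω)
      have hmin : Tendsto (fun n => min (t n * f ω) 0) atTop (nhds 0) := by
        simpa using hu.min (tendsto_const_nhds (x := (0:ℝ)))
      have hmax : Tendsto (fun n => max (t n * f ω) 0) atTop (nhds 0) := by
        simpa using hu.max (tendsto_const_nhds (x := (0:ℝ)))
      have hlow : Tendsto (fun n => (f ω)^2/2 * Real.exp (min (t n * f ω) 0)) atTop
          (nhds ((f ω)^2/2)) := by
        have := (Real.continuous_exp.continuousAt.tendsto.comp hmin).const_mul ((f ω)^2/2)
        simpa using this
      have hup : Tendsto (fun n => (f ω)^2/2 * Real.exp (max (t n * f ω) 0)) atTop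
          (nhds ((f ω)^2/2)) := by
        have := (Real.continuous_exp.continuousAt.tendsto.comp hmax).const_mul ((f ω)^2/2)
        simpa using this
      refine tendsto_of_tendsto_of_tendsto_of_le_of_le' hlow hup ?_ ?_
      · filter_upwards [htc] with n hn
        have h := md_lower (t n * f ω)
        rw [mul_pow] at h
        rw [le_div_iff₀ (pow_pos hn.1 2)]
        nlinarith [Real.exp_pos (min (t n * f ω) 0)]
      · filter_upwards [htc] with n hn
        have h := md_upper (t n * f ω)
        rw [mul_pow] at h
        rw [div_le_iff₀ (pow_pos hn.1 2)]
        nlinarith [Real.exp_pos (max (t n * f ω) 0)]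
  have e1 : ∀ n, ∫ ω, (Real.exp (t n * f ω) - 1 - t n * f ω) / (t n)^2
      = (∫ ω, (Real.exp (t n * f ω) - 1 - t n * f ω)) / (t n)^2 := fun n => integral_div _ _
  have e2 : ∫ ω, (f ω)^2 / 2 = (∫ ω, (f ω)^2) / 2 := integral_div _ _
  rw [e2] at key
  exact key.congr (fun n => e1 n)
lemma md_log_lb {a : ℝ} (ha : 0 ≤ a) : a * (1 - a) ≤ Real.log (1 + a) := by
  have h1 : (0:ℝ) < 1 + a := by linarith
  have h2 := Real.log_le_sub_one_of_pos (inv_pos.2 h1)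
  rw [Real.log_inv] at h2
  have h4 : a * (1 - a) ≤ 1 - (1+a)⁻¹ := by
    have he : 1 - (1+a)⁻¹ = a/(1+a) := by field_simp; ring
    rw [he, le_div_iff₀ h1]; nlinarith [mul_nonneg (mul_nonneg ha ha) ha]
  linarith

open MeasureTheory ProbabilityTheory Filter


set_option maxHeartbeats 2000000 in
/-- Classical moderate deviation theorem, upper bound: for i.i.d. centered
    unit-variance ξᵢ with mgf finite on [0,Λ], and xₙ → 0 with n xₙ² → ∞,
    limsup (1/(n xₙ²)) log Pr(Σᵢ₌₁ⁿ ξᵢ ≥ n xₙ) ≤ -1/2. -/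
theorem moderate_deviations_upper {Ω : Type*} [MeasureSpace Ω]
    [IsProbabilityMeasure (ℙ : Measure Ω)]
    (ξ : ℕ → Ω → ℝ) (hmeas : ∀ i, Measurable (ξ i))
    (hindep : iIndepFun ξ ℙ)
    (hident : ∀ i, Measure.map (ξ i) ℙ = Measure.map (ξ 0) ℙ)
    (hmean : ∫ ω, ξ 0 ω = 0)
    (hvar : ∫ ω, (ξ 0 ω) ^ 2 = 1)
    (Λ : ℝ) (hΛ : 0 < Λ)
    (hmgf : ∀ l ∈ Set.Icc (0 : ℝ) Λ, Integrable (fun ω => Real.exp (l * ξ 0 ω)) ℙ)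
    (x : ℕ → ℝ) (hxpos : ∀ n, 0 < x n)
    (hx0 : Tendsto x atTop (nhds 0))
    (hnx : Tendsto (fun n : ℕ => (n : ℝ) * (x n) ^ 2) atTop atTop) :
    limsup (fun n : ℕ => (1 / ((n : ℝ) * (x n) ^ 2)) *
        Real.log (ℙ {ω | (n : ℝ) * x n ≤ ∑ i ∈ Finset.range n, ξ i ω}).toReal) atTop
      ≤ -(1 / 2) := by
  classical
  -- basic integrability
  have hsq_int : Integrable (fun ω => (ξ 0 ω)^2) ℙ := by
    by_contra h
    rw [integral_undef h] at hvar
    exact one_ne_zero hvar.symm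
  have hξint : Integrable (ξ 0) ℙ := by
    refine (hsq_int.add (integrable_const 1)).mono (hmeas 0).aestronglyMeasurable ?_
    apply ae_of_all; intro ω
    simp only [Real.norm_eq_abs, Pi.add_apply]
    have h1 : |ξ 0 ω| ≤ (ξ 0 ω)^2 + 1 := by
      nlinarith [sq_nonneg (|ξ 0 ω| - 1), sq_abs (ξ 0 ω)]
    exact h1.trans (le_abs_self _)
  have gmeas : ∀ t : ℝ, Measurable (fun y : ℝ => Real.exp (t * y)) :=
    fun t => (measurable_id.const_mul t).exp
  have hexp_int : ∀ t : ℝ, 0 ≤ t → t ≤ Λ → ∀ i, Integrable (fun ω => Real.exp (t * ξ i ω)) ℙ := by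
    intro t ht0 htΛ i
    have h0 := hmgf t ⟨ht0, htΛ⟩
    have hmap : Integrable (fun y => Real.exp (t * y)) (Measure.map (ξ i) ℙ) := by
      rw [hident i]
      exact (integrable_map_measure (gmeas t).aestronglyMeasurable (hmeas 0).aemeasurable).2 h0
    exact (integrable_map_measure (gmeas t).aestronglyMeasurable (hmeas i).aemeasurable).1 hmap
  have hmgf_eq : ∀ (t : ℝ) (i : ℕ), mgf (ξ i) ℙ t = mgf (ξ 0) ℙ t := by
    intro t i
    calc mgf (ξ i) ℙ t = ∫ y, Real.exp (t * y) ∂(Measure.map (ξ i) ℙ) :=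
          (integral_map (hmeas i).aemeasurable (gmeas t).aestronglyMeasurable).symm
      _ = ∫ y, Real.exp (t * y) ∂(Measure.map (ξ 0) ℙ) := by rw [hident i]
      _ = mgf (ξ 0) ℙ t := integral_map (hmeas 0).aemeasurable (gmeas t).aestronglyMeasurable
  set M : ℝ → ℝ := fun t => mgf (ξ 0) ℙ t with hM
  set R : ℝ → ℝ := fun t => ∫ ω, (Real.exp (t * ξ 0 ω) - 1 - t * ξ 0 ω) with hR
  have hRnonneg : ∀ t, 0 ≤ R t := fun t => integral_nonneg (fun ω => md_nonneg _)
  have hMR : ∀ t : ℝ, 0 ≤ t → t ≤ Λ → M t = 1 + R t := by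
    intro t ht0 htΛ
    have h0 := hexp_int t ht0 htΛ 0
    have hlin : Integrable (fun ω => 1 + t * ξ 0 ω) ℙ :=
      (integrable_const 1).add (hξint.const_mul t)
    have e1 : R t = ∫ ω, (Real.exp (t * ξ 0 ω) - (1 + t * ξ 0 ω)) := by
      simp only [hR]; congr 1; funext ω; ring
    have e2 : (∫ ω, (1 + t * ξ 0 ω)) = 1 := by
      rw [integral_add (integrable_const 1) (hξint.const_mul t), integral_const_mul, hmean]
      simp
    rw [e1, integral_sub h0 hlin, e2] at *
    have e3 : M t = ∫ ω, Real.exp (t * ξ 0 ω) := rfl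
    linarith [e3]
  have hMpos : ∀ t : ℝ, 0 ≤ t → t ≤ Λ → 0 < M t :=
    fun t h1 h2 => mgf_pos (hexp_int t h1 h2 0)
  have hlogM_ub : ∀ t : ℝ, 0 ≤ t → t ≤ Λ → Real.log (M t) ≤ R t := by
    intro t h1 h2
    have := Real.log_le_sub_one_of_pos (hMpos t h1 h2)
    rw [hMR t h1 h2] at this ⊢
    linarith
  have hlogM_lb : ∀ t : ℝ, 0 ≤ t → t ≤ Λ → R t * (1 - R t) ≤ Real.log (M t) := by
    intro t h1 h2
    rw [hMR t h1 h2]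
    exact md_log_lb (hRnonneg t)
  have hlogM_nonneg : ∀ t : ℝ, 0 ≤ t → t ≤ Λ → 0 ≤ Real.log (M t) := by
    intro t h1 h2
    apply Real.log_nonneg
    rw [hMR t h1 h2]; linarith [hRnonneg t]
  -- the dominating integrability for the key limit
  have hΛ2 : 0 < Λ/2 := by positivity
  have hsqexp : Integrable (fun ω => (ξ 0 ω)^2 * Real.exp ((Λ/2) * ξ 0 ω)) ℙ := by
    have hbig := hmgf Λ ⟨le_of_lt hΛ, le_refl Λ⟩
    refine ((hbig.const_mul (32/Λ^2)).add hsq_int).mono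
      (((hmeas 0).pow_const 2 |>.mul ((hmeas 0).const_mul _).exp).aestronglyMeasurable) ?_
    apply ae_of_all; intro ω
    have hb : (ξ 0 ω)^2 * Real.exp ((Λ/2) * ξ 0 ω)
        ≤ 32/Λ^2 * Real.exp (Λ * ξ 0 ω) + (ξ 0 ω)^2 := by
      rcases le_total (ξ 0 ω) 0 with hu | hu
      · have h1 : Real.exp ((Λ/2) * ξ 0 ω) ≤ 1 := Real.exp_le_one_iff.2 (by nlinarith)
        have h2 := mul_le_mul_of_nonneg_left h1 (sq_nonneg (ξ 0 ω))
        have h3 : (0:ℝ) ≤ 32/Λ^2 * Real.exp (Λ * ξ 0 ω) := by positivity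
        nlinarith
      · have hv : 0 ≤ Λ/4 * ξ 0 ω := by positivity
        have h1 := md_s_nonneg hv
        have h2 : (ξ 0 ω)^2 ≤ 32/Λ^2 * Real.exp (Λ/4 * ξ 0 ω) := by
          have hL : (0:ℝ) < Λ^2 := by positivity
          rw [div_mul_eq_mul_div, le_div_iff₀ hL]
          nlinarith [h1, hv]
        have h3 := mul_le_mul_of_nonneg_right h2 (Real.exp_pos ((Λ/2) * ξ 0 ω)).le
        rw [mul_assoc, ← Real.exp_add] at h3
        have h4 : Real.exp (Λ/4 * ξ 0 ω + Λ/2 * ξ 0 ω) ≤ Real.exp (Λ * ξ 0 ω) :=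
          Real.exp_le_exp.2 (by nlinarith)
        have h5 : (0:ℝ) ≤ 32/Λ^2 := by positivity
        nlinarith [sq_nonneg (ξ 0 ω), mul_le_mul_of_nonneg_left h4 h5]
    have hn1 : ‖(ξ 0 ω)^2 * Real.exp ((Λ/2) * ξ 0 ω)‖
        = (ξ 0 ω)^2 * Real.exp ((Λ/2) * ξ 0 ω) := Real.norm_of_nonneg (by positivity)
    rw [hn1, Real.norm_eq_abs]
    exact hb.trans (le_abs_self _)
  -- the key limits
  have hlim : ∀ c : ℝ, 0 < c →
      Tendsto (fun n => R (c * x n) / (c * x n)^2) atTop (nhds (1/2)) := by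
    intro c hc
    have hev : ∀ᶠ n in atTop, 0 < c * x n ∧ c * x n ≤ Λ/2 := by
      have h := hx0.eventually (gt_mem_nhds (show (0:ℝ) < Λ/(2*c) by positivity))
      filter_upwards [h] with n hn
      refine ⟨mul_pos hc (hxpos n), ?_⟩
      rw [show Λ/2 = c * (Λ/(2*c)) by field_simp]
      exact (mul_le_mul_iff_right₀ hc).2 hn.le
    have h := md_tendsto (ξ 0) (hmeas 0) hsq_int hΛ2 hsqexp (fun n => c * x n)
      (by simpa using hx0.const_mul c) hev
    rw [hvar] at h
    simpa [hR] using h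
  -- Chernoff upper bound
  have hchern : ∀ n : ℕ, 0 < x n → x n ≤ Λ →
      (ℙ {ω | (n:ℝ) * x n ≤ ∑ i ∈ Finset.range n, ξ i ω}).toReal
        ≤ Real.exp (-(x n) * ((n:ℝ) * x n)) * (M (x n))^n := by
    intro n h1 h2
    have hint : ∀ i ∈ Finset.range n, Integrable (fun ω => Real.exp (x n * ξ i ω)) ℙ :=
      fun i _ => hexp_int (x n) h1.le h2 i
    have hsum_int := hindep.integrable_exp_mul_sum hmeas hint
    have hb := measure_ge_le_exp_mul_mgf (μ := ℙ) (X := ∑ i ∈ Finset.range n, ξ i)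
      ((n:ℝ) * x n) h1.le hsum_int
    have hset : {ω | (n:ℝ) * x n ≤ (∑ i ∈ Finset.range n, ξ i) ω}
        = {ω | (n:ℝ) * x n ≤ ∑ i ∈ Finset.range n, ξ i ω} := by
      ext ω; simp [Finset.sum_apply]
    rw [hset] at hb
    have hmgfsum : mgf (∑ i ∈ Finset.range n, ξ i) ℙ (x n) = (M (x n))^n := by
      rw [hindep.mgf_sum hmeas,
        Finset.prod_congr rfl (fun i _ => hmgf_eq (x n) i), Finset.prod_const,
        Finset.card_range]
    rw [hmgfsum] at hb
    exact hb
  -- identification of integrals of exp of sums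
  have hsum_eq : ∀ (n : ℕ) (t : ℝ), 0 ≤ t → t ≤ Λ →
      (∫ ω, Real.exp (t * ∑ i ∈ Finset.range n, ξ i ω)) = (M t)^n := by
    intro n t h1 h2
    have e1 : mgf (∑ i ∈ Finset.range n, ξ i) ℙ t
        = ∫ ω, Real.exp (t * ∑ i ∈ Finset.range n, ξ i ω) := by
      simp only [mgf, Finset.sum_apply]
    rw [← e1, hindep.mgf_sum hmeas,
      Finset.prod_congr rfl (fun i _ => hmgf_eq t i), Finset.prod_const, Finset.card_range]
  have hsum_intble : ∀ (n : ℕ) (t : ℝ), 0 ≤ t → t ≤ Λ →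
      Integrable (fun ω => Real.exp (t * ∑ i ∈ Finset.range n, ξ i ω)) ℙ := by
    intro n t h1 h2
    have h := hindep.integrable_exp_mul_sum hmeas
      (s := Finset.range n) (fun i _ => hexp_int t h1 h2 i)
    refine h.congr ?_
    apply ae_of_all; intro ω
    simp [Finset.sum_apply]
  -- Paley-Zygmund type lower bound
  have hPZ : ∀ n : ℕ, 0 < x n → 8 * x n ≤ Λ →
      0 < (M (4 * x n))^n - Real.exp (4 * x n * ((n:ℝ) * x n)) →
      ((M (4 * x n))^n - Real.exp (4 * x n * ((n:ℝ) * x n)))^2 / (M (8 * x n))^n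
        ≤ (ℙ {ω | (n:ℝ) * x n ≤ ∑ i ∈ Finset.range n, ξ i ω}).toReal := by
    intro n hx hxΛ hδ
    have ht4a : (0:ℝ) ≤ 4 * x n := by positivity
    have ht4b : 4 * x n ≤ Λ := by linarith
    have ht8a : (0:ℝ) ≤ 8 * x n := by positivity
    set Z : Ω → ℝ := fun ω => Real.exp (4 * x n * ∑ i ∈ Finset.range n, ξ i ω) with hZ
    set A : Set Ω := {ω | (n:ℝ) * x n ≤ ∑ i ∈ Finset.range n, ξ i ω} with hA
    clear_value Z A
    have hSmeas : Measurable (fun ω => ∑ i ∈ Finset.range n, ξ i ω) :=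
      Finset.measurable_sum _ (fun i _ => hmeas i)
    have hAmeas : MeasurableSet A := by
      rw [hA]; exact measurableSet_le measurable_const hSmeas
    have hZint : Integrable Z ℙ := by
      rw [hZ]; exact hsum_intble n (4 * x n) ht4a ht4b
    have hZsq : (fun ω => (Z ω)^2) = fun ω => Real.exp (8 * x n * ∑ i ∈ Finset.range n, ξ i ω) := by
      funext ω
      rw [hZ, sq, ← Real.exp_add]
      ring_nf
    have hZ2int : Integrable (fun ω => (Z ω)^2) ℙ := by
      rw [hZsq]; exact hsum_intble n (8 * x n) ht8a hxΛ
    have hm : ∫ ω, Z ω = (M (4 * x n))^n := by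
      rw [hZ]; exact hsum_eq n (4 * x n) ht4a ht4b
    have hw : ∫ ω, (Z ω)^2 = (M (8 * x n))^n := by
      rw [hZsq]; exact hsum_eq n (8 * x n) ht8a hxΛ
    have hwpos : (0:ℝ) < (M (8 * x n))^n := pow_pos (hMpos _ ht8a hxΛ) n
    set E0 := Real.exp (4 * x n * ((n:ℝ) * x n)) with hE0
    set δ := (M (4 * x n))^n - E0 with hδdef
    have hE0pos : 0 < E0 := by rw [hE0]; exact Real.exp_pos _
    clear_value δ
    -- Step 1 : ∫ over Aᶜ of Z is at most E0
    have hstep1 : ∫ ω in Aᶜ, Z ω ≤ E0 := by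
      have hb1 : ∀ ω ∈ Aᶜ, Z ω ≤ E0 := by
        intro ω hω
        rw [hA] at hω
        simp only [Set.mem_compl_iff, Set.mem_setOf_eq, not_le] at hω
        rw [hZ, hE0]
        exact Real.exp_le_exp.2 (mul_le_mul_of_nonneg_left hω.le ht4a)
      calc ∫ ω in Aᶜ, Z ω ≤ ∫ _ω in Aᶜ, E0 :=
            setIntegral_mono_on hZint.integrableOn
              (integrable_const E0).integrableOn hAmeas.compl hb1
        _ = (ℙ Aᶜ).toReal * E0 := by rw [setIntegral_const]; rfl
        _ ≤ 1 * E0 := by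
            apply mul_le_mul_of_nonneg_right _ hE0pos.le
            calc (ℙ Aᶜ).toReal ≤ (ℙ Set.univ).toReal :=
                  ENNReal.toReal_mono (measure_ne_top _ _) (measure_mono (Set.subset_univ _))
              _ = 1 := by simp
        _ = E0 := one_mul E0
    -- Step 2 : δ ≤ ∫ over A of Z
    have hstep2 : δ ≤ ∫ ω in A, Z ω := by
      have hsplit := integral_add_compl hAmeas hZint
      rw [hm] at hsplit
      rw [hδdef]
      linarith
    -- Step 3 : AM-GM bound
    set s := (M (8 * x n))^n / δ with hs
    clear_value s
    have hspos : 0 < s := by rw [hs]; exact div_pos hwpos hδ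
    have hstep3 : ∫ ω in A, Z ω ≤ (M (8 * x n))^n / (2*s) + s/2 * (ℙ A).toReal := by
      have h2s : (0:ℝ) < 2*s := by linarith
      have hAM : ∀ ω ∈ A, Z ω ≤ (Z ω)^2/(2*s) + s/2 := by
        intro ω _
        rw [div_add_div _ _ (ne_of_gt h2s) (by norm_num : (2:ℝ) ≠ 0),
          le_div_iff₀ (by nlinarith : (0:ℝ) < 2*s*2)]
        nlinarith [sq_nonneg (Z ω - s)]
      have hi1 : IntegrableOn (fun ω => (Z ω)^2/(2*s)) A ℙ := (hZ2int.div_const _).integrableOn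
      have hi2 : IntegrableOn (fun _ω : Ω => s/2) A ℙ := (integrable_const _).integrableOn
      have ha1 : ∫ ω in A, Z ω ≤ ∫ ω in A, ((Z ω)^2/(2*s) + s/2) :=
        setIntegral_mono_on hZint.integrableOn (hi1.add hi2) hAmeas hAM
      have ha2 : (∫ ω in A, ((Z ω)^2/(2*s) + s/2)) = (∫ ω in A, (Z ω)^2/(2*s)) + ∫ _ω in A, s/2 :=
        integral_add hi1 hi2
      have ha3 : (∫ ω in A, (Z ω)^2/(2*s)) ≤ (M (8 * x n))^n / (2*s) := by
        rw [integral_div]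
        apply div_le_div_of_nonneg_right _ h2s.le
        rw [← hw]
        exact setIntegral_le_integral hZ2int (ae_of_all _ (fun ω => sq_nonneg _))
      have ha4 : (∫ _ω in A, s/2 : ℝ) = s/2 * (ℙ A).toReal := by
        rw [setIntegral_const, smul_eq_mul, mul_comm]; rfl
      linarith [ha1, ha2.le, ha2.ge, ha3, ha4.le, ha4.ge]
      -- done
    -- combine
    have hcomb : δ ≤ (M (8 * x n))^n / (2*s) + s/2 * (ℙ A).toReal :=
      hstep2.trans hstep3
    have hkey : δ^2 / (M (8 * x n))^n ≤ (ℙ A).toReal := by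
      have h1 : (M (8 * x n))^n / (2*s) = δ/2 := by
        rw [hs]; field_simp
      rw [h1] at hcomb
      have h2 : δ/2 ≤ s/2 * (ℙ A).toReal := by linarith
      rw [hs] at h2
      rw [div_le_iff₀ hwpos]
      have h3 := mul_le_mul_of_nonneg_left h2 (le_of_lt hδ)
      calc δ^2 = δ * (δ/2) * 2 := by ring
        _ ≤ δ * ((M (8 * x n))^n / δ / 2 * (ℙ A).toReal) * 2 := by
            apply mul_le_mul_of_nonneg_right _ (by norm_num)
            exact mul_le_mul_of_nonneg_left h2 (le_of_lt hδ)
        _ = (ℙ A).toReal * (M (8 * x n))^n := by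
            field_simp
    exact hkey
  -- limits used in the final estimates
  have hF1 : Tendsto (fun n => R (x n) / (x n)^2) atTop (nhds (1/2)) := by
    simpa using hlim 1 one_pos
  have hF4 := hlim 4 (by norm_num)
  have hF8 := hlim 8 (by norm_num)
  set v : ℕ → ℝ := fun n => -1 + R (x n) / (x n)^2 with hv
  have hv_tendsto : Tendsto v atTop (nhds (-(1/2))) := by
    have he : (-(1/2) : ℝ) = -1 + 1/2 := by norm_num
    rw [hv, he]
    exact tendsto_const_nhds.add hF1
  have e_xsmall : ∀ᶠ n in atTop, x n < Λ/16 := hx0.eventually (gt_mem_nhds (by positivity))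
  have e_x1 : ∀ᶠ n in atTop, x n < 1/10 := hx0.eventually (gt_mem_nhds (by norm_num))
  have e_F4 : ∀ᶠ n in atTop, R (4 * x n)/(4 * x n)^2 ∈ Set.Ioo (0.45:ℝ) 0.55 :=
    hF4 (Ioo_mem_nhds (by norm_num) (by norm_num))
  have e_F8 : ∀ᶠ n in atTop, R (8 * x n)/(8 * x n)^2 ∈ Set.Ioo (0.45:ℝ) 0.55 :=
    hF8 (Ioo_mem_nhds (by norm_num) (by norm_num))
  have e_nx : ∀ᶠ n : ℕ in atTop, (2:ℝ) ≤ (n:ℝ) * (x n)^2 := hnx.eventually_ge_atTop 2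
  have hmain : ∀ᶠ n : ℕ in atTop,
      (-37:ℝ) ≤ (1 / ((n : ℝ) * (x n) ^ 2)) *
          Real.log (ℙ {ω | (n : ℝ) * x n ≤ ∑ i ∈ Finset.range n, ξ i ω}).toReal ∧
        (1 / ((n : ℝ) * (x n) ^ 2)) *
          Real.log (ℙ {ω | (n : ℝ) * x n ≤ ∑ i ∈ Finset.range n, ξ i ω}).toReal ≤ v n := by
    filter_upwards [e_xsmall, e_x1, e_F4, e_F8, e_nx] with n h1 h2 h4 h8 hnx2
    have hx := hxpos n
    have hx2 : (0:ℝ) < (x n)^2 := by positivity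
    have hnne : n ≠ 0 := by
      rintro rfl
      norm_num at hnx2
    have hnpos : (0:ℝ) < (n:ℝ) := Nat.cast_pos.2 (Nat.pos_of_ne_zero hnne)
    have hnx2' : (0:ℝ) < (n:ℝ) * (x n)^2 := lt_of_lt_of_le two_pos hnx2
    have hxΛ : x n ≤ Λ := by linarith
    have h8Λ : 8 * x n ≤ Λ := by linarith
    have ht4a : (0:ℝ) ≤ 4 * x n := by positivity
    have ht4b : 4 * x n ≤ Λ := by linarith
    have ht8a : (0:ℝ) ≤ 8 * x n := by positivity
    obtain ⟨h4l, h4u⟩ := h4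
    obtain ⟨h8l, h8u⟩ := h8
    have ht4pos : (0:ℝ) < (4 * x n)^2 := by positivity
    have ht8pos : (0:ℝ) < (8 * x n)^2 := by positivity
    have h4l' : (0.45:ℝ) * (16*(x n)^2) ≤ R (4 * x n) := by
      have h := mul_le_mul_of_nonneg_right h4l.le ht4pos.le
      rw [div_mul_cancel₀ _ (ne_of_gt ht4pos)] at h
      calc (0.45:ℝ) * (16*(x n)^2) = 0.45 * (4*x n)^2 := by ring
        _ ≤ R (4 * x n) := h
    have h4u' : R (4 * x n) ≤ (0.55:ℝ) * (16*(x n)^2) := by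
      have h := mul_le_mul_of_nonneg_right h4u.le ht4pos.le
      rw [div_mul_cancel₀ _ (ne_of_gt ht4pos)] at h
      calc R (4 * x n) ≤ 0.55 * (4*x n)^2 := h
        _ = (0.55:ℝ) * (16*(x n)^2) := by ring
    have h8u' : R (8 * x n) ≤ (0.55:ℝ) * (64*(x n)^2) := by
      have h := mul_le_mul_of_nonneg_right h8u.le ht8pos.le
      rw [div_mul_cancel₀ _ (ne_of_gt ht8pos)] at h
      calc R (8 * x n) ≤ 0.55 * (8*x n)^2 := h
        _ = (0.55:ℝ) * (64*(x n)^2) := by ring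
    have hx2s : (x n)^2 ≤ 1/100 := by
      have h := mul_le_mul h2.le h2.le hx.le (by norm_num : (0:ℝ) ≤ 1/10)
      calc (x n)^2 = x n * x n := sq (x n)
        _ ≤ 1/100 := by linarith
    have hR4small : R (4 * x n) ≤ 1/10 := by linarith
    have hL4l : 6 * (x n)^2 ≤ Real.log (M (4 * x n)) := by
      have h := hlogM_lb (4 * x n) ht4a ht4b
      have e : R (4*x n) * (1 - R (4*x n))
          = R (4*x n) - R (4*x n) * R (4*x n) := by ring
      have hsq : R (4*x n) * R (4*x n) ≤ R (4*x n) * (1/10) :=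
        mul_le_mul_of_nonneg_left hR4small (hRnonneg _)
      linarith
    have hL8u : Real.log (M (8 * x n)) ≤ 36 * (x n)^2 := by
      have h := hlogM_ub (8 * x n) ht8a h8Λ
      linarith
    have hL4nn : 0 ≤ Real.log (M (4 * x n)) := hlogM_nonneg _ ht4a ht4b
    have hMt4 : 0 < M (4 * x n) := hMpos _ ht4a ht4b
    have hMt8 : 0 < M (8 * x n) := hMpos _ ht8a h8Λ
    have hwpos : (0:ℝ) < (M (8 * x n))^n := pow_pos hMt8 n
    have hMpow : (M (4 * x n))^n = Real.exp ((n:ℝ) * Real.log (M (4 * x n))) := by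
      rw [← Real.log_pow, Real.exp_log (pow_pos hMt4 n)]
    have hδpos : 0 < (M (4 * x n))^n - Real.exp (4 * x n * ((n:ℝ) * x n)) ∧
        (M (4 * x n))^n / 2 ≤ (M (4 * x n))^n - Real.exp (4 * x n * ((n:ℝ) * x n)) := by
      have hlogcmp : 4 * x n * ((n:ℝ) * x n) + 1 ≤ (n:ℝ) * Real.log (M (4 * x n)) := by
        have h := mul_le_mul_of_nonneg_left hL4l hnpos.le
        have e1 : 4 * x n * ((n:ℝ) * x n) = 4 * ((n:ℝ) * (x n)^2) := by ring
        have e2 : (n:ℝ) * (6 * (x n)^2) = 6 * ((n:ℝ) * (x n)^2) := by ring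
        linarith
      have hexp2 : Real.exp (4 * x n * ((n:ℝ) * x n)) * 2 ≤ (M (4 * x n))^n := by
        rw [hMpow]
        have h2e : (2:ℝ) ≤ Real.exp 1 := by
          have := Real.add_one_le_exp 1; linarith
        calc Real.exp (4 * x n * ((n:ℝ) * x n)) * 2
            ≤ Real.exp (4 * x n * ((n:ℝ) * x n)) * Real.exp 1 :=
              mul_le_mul_of_nonneg_left h2e (Real.exp_pos _).le
          _ = Real.exp (4 * x n * ((n:ℝ) * x n) + 1) := (Real.exp_add _ _).symm
          _ ≤ Real.exp ((n:ℝ) * Real.log (M (4 * x n))) := Real.exp_le_exp.2 hlogcmp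
      constructor
      · linarith [Real.exp_pos (4 * x n * ((n:ℝ) * x n))]
      · linarith [Real.exp_pos (4 * x n * ((n:ℝ) * x n))]
    have hlow := hPZ n hx h8Λ hδpos.1
    set Pn := (ℙ {ω | (n:ℝ) * x n ≤ ∑ i ∈ Finset.range n, ξ i ω}).toReal with hPn
    set δ := (M (4 * x n))^n - Real.exp (4 * x n * ((n:ℝ) * x n)) with hδdef
    have hδp : 0 < δ := hδpos.1
    have hdw : (0:ℝ) < δ^2 / (M (8 * x n))^n := div_pos (pow_pos hδp 2) hwpos
    have hPpos : 0 < Pn := lt_of_lt_of_le hdw hlow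
    have hlogPn_lb : -2 * Real.log 2 - 36 * ((n:ℝ) * (x n)^2) ≤ Real.log Pn := by
      have hstep : Real.log (δ^2 / (M (8 * x n))^n) ≤ Real.log Pn :=
        Real.log_le_log hdw hlow
      rw [Real.log_div (ne_of_gt (pow_pos hδp 2)) (ne_of_gt hwpos),
        Real.log_pow, Real.log_pow] at hstep
      have hlogδ : Real.log ((M (4 * x n))^n / 2) ≤ Real.log δ :=
        Real.log_le_log (by positivity) hδpos.2
      rw [Real.log_div (ne_of_gt (pow_pos hMt4 n)) (by norm_num), Real.log_pow] at hlogδ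
      have hnL4 : (0:ℝ) ≤ (n:ℝ) * Real.log (M (4 * x n)) :=
        mul_nonneg hnpos.le hL4nn
      have hnL8 : (n:ℝ) * Real.log (M (8 * x n)) ≤ 36 * ((n:ℝ) * (x n)^2) := by
        have h := mul_le_mul_of_nonneg_left hL8u hnpos.le
        have e : (n:ℝ) * (36 * (x n)^2) = 36 * ((n:ℝ) * (x n)^2) := by ring
        linarith
      push_cast at hstep
      linarith
    constructor
    · have hlog2 : Real.log 2 ≤ 1 := by
        have := Real.log_le_sub_one_of_pos (by norm_num : (0:ℝ) < 2); linarith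
      have hL : -2 - 36 * ((n:ℝ) * (x n)^2) ≤ Real.log Pn := by linarith
      have hcnn : (0:ℝ) ≤ 1 / ((n:ℝ) * (x n)^2) := by positivity
      have hprod := mul_le_mul_of_nonneg_left hL hcnn
      have hc1 : (1 / ((n:ℝ) * (x n)^2)) * ((n:ℝ) * (x n)^2) = 1 :=
        one_div_mul_cancel (ne_of_gt hnx2')
      have hcle : 1 / ((n:ℝ) * (x n)^2) ≤ 1/2 := by
        rw [div_le_div_iff₀ hnx2' (by norm_num)]; linarith
      have hexp : (1 / ((n:ℝ) * (x n)^2)) * (-2 - 36 * ((n:ℝ) * (x n)^2))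
          = -2 * (1 / ((n:ℝ) * (x n)^2)) - 36 * ((1 / ((n:ℝ) * (x n)^2)) * ((n:ℝ) * (x n)^2)) := by
        ring
      rw [hexp, hc1] at hprod
      linarith
    · have hch := hchern n hx hxΛ
      have hMx : 0 < M (x n) := hMpos _ hx.le hxΛ
      have hlogle := Real.log_le_log hPpos hch
      rw [Real.log_mul (Real.exp_ne_zero _) (ne_of_gt (pow_pos hMx n)),
        Real.log_exp, Real.log_pow] at hlogle
      have hlM := hlogM_ub (x n) hx.le hxΛ
      have hlogPn_ub : Real.log Pn ≤ -((n:ℝ) * (x n)^2) + (n:ℝ) * R (x n) := by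
        have h := mul_le_mul_of_nonneg_left hlM hnpos.le
        have e : -x n * ((n:ℝ) * x n) = -((n:ℝ) * (x n)^2) := by ring
        linarith
      simp only [hv]
      have hcnn : (0:ℝ) ≤ 1 / ((n:ℝ) * (x n)^2) := by positivity
      have hprod := mul_le_mul_of_nonneg_left hlogPn_ub hcnn
      have hc1 : (1 / ((n:ℝ) * (x n)^2)) * ((n:ℝ) * (x n)^2) = 1 :=
        one_div_mul_cancel (ne_of_gt hnx2')
      have hc2 : (1 / ((n:ℝ) * (x n)^2)) * ((n:ℝ) * R (x n)) = R (x n) / (x n)^2 := by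
        rw [div_mul_eq_mul_div, one_mul, div_eq_div_iff hnx2'.ne' hx2.ne']
        ring
      have hexp : (1 / ((n:ℝ) * (x n)^2)) * (-((n:ℝ) * (x n)^2) + (n:ℝ) * R (x n))
          = -((1 / ((n:ℝ) * (x n)^2)) * ((n:ℝ) * (x n)^2))
            + (1 / ((n:ℝ) * (x n)^2)) * ((n:ℝ) * R (x n)) := by
        ring
      rw [hexp, hc1, hc2] at hprod
      linarith
  have hcobdd : IsCoboundedUnder (· ≤ ·) atTop
      (fun n : ℕ => (1 / ((n : ℝ) * (x n) ^ 2)) *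
        Real.log (ℙ {ω | (n : ℝ) * x n ≤ ∑ i ∈ Finset.range n, ξ i ω}).toReal) :=
    isCoboundedUnder_le_of_eventually_le atTop (x := (-37:ℝ)) (hmain.mono fun n h => h.1)
  have hle : ∀ᶠ n : ℕ in atTop,
      (1 / ((n : ℝ) * (x n) ^ 2)) *
        Real.log (ℙ {ω | (n : ℝ) * x n ≤ ∑ i ∈ Finset.range n, ξ i ω}).toReal ≤ v n :=
    hmain.mono fun n h => h.2
  calc limsup (fun n : ℕ => (1 / ((n : ℝ) * (x n) ^ 2)) *
        Real.log (ℙ {ω | (n : ℝ) * x n ≤ ∑ i ∈ Finset.range n, ξ i ω}).toReal) atTop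
      ≤ limsup v atTop := limsup_le_limsup hle hcobdd hv_tendsto.isBoundedUnder_le
    _ = -(1/2) := hv_tendsto.limsup_eq
end

section
/- Let gₙ(t) = 1 + (cₙ/θₙ)·1_{(θₙ,2θₙ)}(t) - √cₙ·1_{(1-√cₙ,1)}(t) on (0,1), where cₙ = xₙ^{(r+q)/q}, with θₙ → 0, xₙ → 0, cₙ/θₙ → ∞ (so cₙ → 0 and √cₙ < 1 eventually). Then gₙ is a probability density on (0,1) and the Kullback–Leibler divergence of the measure Γₙ with density gₙ from the uniform distribution P₀ satisfies D(Γₙ‖P₀) = cₙ log(cₙ/θₙ)(1 + o(1)). -/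
open MeasureTheory Filter

lemma density_KL_aux (θc cc : ℝ) (hθ : 0 < θc) (hc : 0 < cc)
    (hb : Real.sqrt cc < 1/2) (hθs : θc < 1/8)
    (g : ℝ → ℝ)
    (hg : ∀ t, g t = 1 + (cc / θc) * (Set.Ioo θc (2 * θc)).indicator 1 t
        - Real.sqrt cc * (Set.Ioo (1 - Real.sqrt cc) 1).indicator 1 t) :
    (∀ t ∈ Set.Ioo (0:ℝ) 1, 0 ≤ g t) ∧
    (∫ t in Set.Ioo (0:ℝ) 1, g t) = 1 ∧
    (∫ t in Set.Ioo (0:ℝ) 1, g t * Real.log (g t))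
      = θc * ((1 + cc/θc) * Real.log (1 + cc/θc))
        + Real.sqrt cc * ((1 - Real.sqrt cc) * Real.log (1 - Real.sqrt cc)) := by
  set b := Real.sqrt cc with hbdef
  have hbpos : 0 < b := Real.sqrt_pos.2 hc
  have hbb : b * b = cc := Real.mul_self_sqrt hc.le
  set I₁ : Set ℝ := Set.Ioo θc (2 * θc) with hI₁
  set I₂ : Set ℝ := Set.Ioo (1 - b) 1 with hI₂
  have hupos : 0 < cc / θc := div_pos hc hθ
  have hsub1 : I₁ ⊆ Set.Ioo (0:ℝ) 1 := by
    intro t ht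
    exact ⟨lt_trans hθ ht.1, by nlinarith [ht.2]⟩
  have hsub2 : I₂ ⊆ Set.Ioo (0:ℝ) 1 := by
    intro t ht
    exact ⟨by linarith [ht.1], ht.2⟩
  have hdisj : ∀ t, t ∈ I₂ → t ∉ I₁ := by
    intro t ht2 ht1
    have := ht1.2
    have := ht2.1
    nlinarith
  -- nonnegativity
  have hnonneg : ∀ t ∈ Set.Ioo (0:ℝ) 1, 0 ≤ g t := by
    intro t _
    rw [hg t]
    by_cases h2 : t ∈ I₂
    · have h1 : t ∉ I₁ := hdisj t h2
      simp only [Set.indicator_of_mem h2, Set.indicator_of_notMem h1, Pi.one_apply]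
      nlinarith
    · simp only [Set.indicator_of_notMem h2]
      by_cases h1 : t ∈ I₁
      · simp only [Set.indicator_of_mem h1, Pi.one_apply]
        nlinarith
      · simp [Set.indicator_of_notMem h1]
  -- integral of indicators
  have hvol1 : (volume I₁).toReal = θc := by
    rw [hI₁, Real.volume_Ioo, ENNReal.toReal_ofReal (by linarith)]
    ring
  have hvol2 : (volume I₂).toReal = b := by
    rw [hI₂, Real.volume_Ioo, ENNReal.toReal_ofReal (by linarith)]
    ring
  have hindint : ∀ (I : Set ℝ), I ⊆ Set.Ioo (0:ℝ) 1 → MeasurableSet I → ∀ (k : ℝ),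
      (∫ t in Set.Ioo (0:ℝ) 1, I.indicator (fun _ => k) t) = (volume I).toReal * k := by
    intro I hsub hmeas k
    rw [setIntegral_indicator hmeas, Set.inter_eq_self_of_subset_right hsub,
      setIntegral_const, smul_eq_mul, measureReal_def]
  have hinteg : ∀ (I : Set ℝ) (hI : MeasurableSet I), volume I < ⊤ → ∀ (k : ℝ),
      Integrable (I.indicator (fun _ => k)) (volume.restrict (Set.Ioo (0:ℝ) 1)) := by
    intro I hI hIvol k
    exact ((integrableOn_const hIvol.ne).integrable_indicator hI).integrableOn
  have hIvol1 : volume I₁ < ⊤ := by rw [hI₁, Real.volume_Ioo]; exact ENNReal.ofReal_lt_top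
  have hIvol2 : volume I₂ < ⊤ := by rw [hI₂, Real.volume_Ioo]; exact ENNReal.ofReal_lt_top
  refine ⟨hnonneg, ?_, ?_⟩
  · -- integral equals 1
    have hg2 : ∀ t, g t = 1 + I₁.indicator (fun _ => cc/θc) t - I₂.indicator (fun _ => b) t := by
      intro t
      rw [hg t]
      by_cases h1 : t ∈ I₁ <;> by_cases h2 : t ∈ I₂ <;>
        simp [Set.indicator_of_mem, Set.indicator_of_notMem, h1, h2]
    simp only [hg2]
    have hadd : Integrable (fun t => 1 + I₁.indicator (fun _ => cc/θc) t)
        (volume.restrict (Set.Ioo (0:ℝ) 1)) :=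
      (integrable_const 1).add (hinteg I₁ measurableSet_Ioo hIvol1 (cc/θc))
    rw [integral_sub hadd (hinteg I₂ measurableSet_Ioo hIvol2 b),
      integral_add (integrable_const 1) (hinteg I₁ measurableSet_Ioo hIvol1 (cc/θc)),
      hindint I₁ hsub1 measurableSet_Ioo, hindint I₂ hsub2 measurableSet_Ioo,
      setIntegral_const, smul_eq_mul, hvol1, hvol2, measureReal_def, Real.volume_Ioo]
    rw [ENNReal.toReal_ofReal (by norm_num)]
    field_simp
    linarith [hbb]
  · -- integral of g log g
    have hpt : ∀ t, g t * Real.log (g t)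
        = I₁.indicator (fun _ => (1 + cc/θc) * Real.log (1 + cc/θc)) t
          + I₂.indicator (fun _ => (1 - b) * Real.log (1 - b)) t := by
      intro t
      by_cases h2 : t ∈ I₂
      · have h1 : t ∉ I₁ := hdisj t h2
        rw [hg t]
        simp [Set.indicator_of_mem h2, Set.indicator_of_notMem h1]
      · by_cases h1 : t ∈ I₁
        · rw [hg t]
          simp [Set.indicator_of_mem h1, Set.indicator_of_notMem h2]
        · rw [hg t]
          simp [Set.indicator_of_notMem h1, Set.indicator_of_notMem h2]
    simp only [hpt]
    rw [integral_add (hinteg I₁ measurableSet_Ioo hIvol1 _) (hinteg I₂ measurableSet_Ioo hIvol2 _),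
      hindint I₁ hsub1 measurableSet_Ioo, hindint I₂ hsub2 measurableSet_Ioo, hvol1, hvol2]

/-- With cₙ = xₙ^{(r+q)/q}, θₙ → 0, xₙ → 0, cₙ/θₙ → ∞, the function
    gₙ(t) = 1 + (cₙ/θₙ)1_{(θₙ,2θₙ)}(t) - √cₙ 1_{(1-√cₙ,1)}(t) is eventually a
    probability density on (0,1), and D(Γₙ‖P₀) = ∫ gₙ log gₙ satisfies
    D(Γₙ‖P₀) = cₙ log(cₙ/θₙ)(1 + o(1)). -/
theorem density_KL_asymptotics (r q : ℝ) (hr : r ∈ Set.Ioo (0 : ℝ) (1 / 2))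
    (hq : 0 < q) (hqr : q < r)
    (θ x : ℕ → ℝ) (hθpos : ∀ n, 0 < θ n) (hxpos : ∀ n, 0 < x n)
    (hθ0 : Tendsto θ atTop (nhds 0)) (hx0 : Tendsto x atTop (nhds 0))
    (c : ℕ → ℝ) (hc : ∀ n, c n = x n ^ ((r + q) / q))
    (hcθ : Tendsto (fun n => c n / θ n) atTop atTop)
    (g : ℕ → ℝ → ℝ)
    (hg : ∀ n t, g n t = 1 + (c n / θ n) * (Set.Ioo (θ n) (2 * θ n)).indicator 1 t
        - Real.sqrt (c n) * (Set.Ioo (1 - Real.sqrt (c n)) 1).indicator 1 t) :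
    (∀ᶠ n in atTop,
        (∀ t ∈ Set.Ioo (0 : ℝ) 1, 0 ≤ g n t) ∧
          ∫ t in Set.Ioo (0 : ℝ) 1, g n t = 1) ∧
      Tendsto (fun n =>
          (∫ t in Set.Ioo (0 : ℝ) 1, g n t * Real.log (g n t)) /
            (c n * Real.log (c n / θ n))) atTop (nhds 1) := by
  have hp : 0 < (r + q) / q := div_pos (by linarith [hr.1]) hq
  have hcpos : ∀ n, 0 < c n := fun n => by
    rw [hc n]; exact Real.rpow_pos_of_pos (hxpos n) _
  have hbpos : ∀ n, 0 < Real.sqrt (c n) := fun n => Real.sqrt_pos.2 (hcpos n)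
  have hc0 : Tendsto c atTop (nhds 0) := by
    have h1 : Tendsto (fun n => x n ^ ((r + q) / q)) atTop (nhds (0 ^ ((r + q) / q))) :=
      hx0.rpow_const (Or.inr hp.le)
    rw [Real.zero_rpow hp.ne'] at h1
    have : c = fun n => x n ^ ((r + q) / q) := funext hc
    rw [this]; exact h1
  have hb0 : Tendsto (fun n => Real.sqrt (c n)) atTop (nhds 0) := by
    have := (Real.continuous_sqrt.tendsto 0).comp hc0
    simpa [Function.comp_def] using this
  -- eventual conditions
  have hev : ∀ᶠ n in atTop, Real.sqrt (c n) < 1/2 ∧ θ n < 1/8 ∧ 2 < c n / θ n := by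
    filter_upwards [hb0.eventually_lt_const (by norm_num : (0:ℝ) < 1/2),
      hθ0.eventually_lt_const (by norm_num : (0:ℝ) < 1/8),
      hcθ.eventually_gt_atTop 2] with n h1 h2 h3
    exact ⟨h1, h2, h3⟩
  constructor
  · filter_upwards [hev] with n ⟨h1, h2, h3⟩
    obtain ⟨hn, hi, _⟩ := density_KL_aux (θ n) (c n) (hθpos n) (hcpos n) h1 h2 (g n) (hg n)
    exact ⟨hn, hi⟩
  · -- the limit
    have hv : Tendsto (fun n => θ n / c n) atTop (nhds 0) := by
      have := tendsto_inv_atTop_zero.comp hcθ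
      refine this.congr fun n => ?_
      simp [Function.comp, inv_div]
    have hL : Tendsto (fun n => Real.log (c n / θ n)) atTop atTop :=
      Real.tendsto_log_atTop.comp hcθ
    have hLinv : Tendsto (fun n => (Real.log (c n / θ n))⁻¹) atTop (nhds 0) :=
      tendsto_inv_atTop_zero.comp hL
    have hA : Tendsto (fun n => Real.log (1 + θ n / c n)) atTop (nhds 0) := by
      have h1 : Tendsto (fun n => 1 + θ n / c n) atTop (nhds 1) := by
        have := (tendsto_const_nhds : Tendsto (fun _ : ℕ => (1:ℝ)) atTop (nhds 1)).add hv
        simpa using this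
      have := (Real.continuousAt_log one_ne_zero).tendsto.comp h1
      simpa [Function.comp_def, Real.log_one] using this
    have hS : Tendsto (fun n => Real.log (1 - Real.sqrt (c n)) / Real.sqrt (c n))
        atTop (nhds (-1)) := by
      have hderiv : HasDerivAt (fun y : ℝ => Real.log (1 - y)) (-1) 0 := by
        have h1 : HasDerivAt (fun y : ℝ => 1 - y) (-1) 0 := (hasDerivAt_id 0).const_sub 1
        have h2 := (Real.hasDerivAt_log (by norm_num : (1:ℝ) - 0 ≠ 0)).comp 0 h1
        simpa [Function.comp_def] using h2
      have hslope := hasDerivAt_iff_tendsto_slope.mp hderiv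
      have hbne : Tendsto (fun n => Real.sqrt (c n)) atTop (nhdsWithin 0 {(0:ℝ)}ᶜ) := by
        rw [tendsto_nhdsWithin_iff]
        exact ⟨hb0, Eventually.of_forall fun n => (hbpos n).ne'⟩
      have := hslope.comp hbne
      refine this.congr fun n => ?_
      simp [Function.comp, slope_def_field, Real.log_one]
    have hF : Tendsto (fun n =>
        (θ n / c n + 1) * (1 + Real.log (1 + θ n / c n) * (Real.log (c n / θ n))⁻¹)
          + (1 - Real.sqrt (c n)) * (Real.log (1 - Real.sqrt (c n)) / Real.sqrt (c n))
            * (Real.log (c n / θ n))⁻¹) atTop (nhds 1) := by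
      have h1 := ((hv.add_const 1).mul ((hA.mul hLinv).const_add 1)).add
        (((hb0.const_sub 1).mul hS).mul hLinv)
      have : ((0:ℝ) + 1) * (1 + 0 * 0) + (1 - 0) * (-1) * 0 = 1 := by norm_num
      rwa [this] at h1
    refine hF.congr' ?_
    filter_upwards [hev] with n ⟨h1, h2, h3⟩
    obtain ⟨_, _, hglg⟩ := density_KL_aux (θ n) (c n) (hθpos n) (hcpos n) h1 h2 (g n) (hg n)
    rw [hglg]
    have hθn := hθpos n
    have hcn := hcpos n
    have hLpos : 0 < Real.log (c n / θ n) := Real.log_pos (by linarith)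
    have hupos : 0 < c n / θ n := div_pos hcn hθn
    have hvpos : 0 < 1 + θ n / c n := by positivity
    have hlogdecomp : Real.log (1 + c n / θ n)
        = Real.log (c n / θ n) + Real.log (1 + θ n / c n) := by
      have heq : (1:ℝ) + c n / θ n = (c n / θ n) * (1 + θ n / c n) := by
        field_simp; ring
      rw [heq, Real.log_mul hupos.ne' hvpos.ne']
    rw [hlogdecomp]
    set s := Real.sqrt (c n) with hs
    have hspos : 0 < s := hbpos n
    have hss : c n = s * s := (Real.mul_self_sqrt (hcpos n).le).symm
    set L := Real.log (c n / θ n) with hLdef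
    set A := Real.log (1 + θ n / c n) with hAdef
    set B := Real.log (1 - s) with hBdef
    rw [hss]
    field_simp
end
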